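/- arXiv:2510.03850 — 2 statements merged into one kernel-verified Lean document; each statement's English description precedes it below -/
import Mathlib

section
/- Let μ, r̂ > 0, 0 < α < 1, let L ≥ 1 be an integer, let r > 0, and let N ≥ 1 be an integer. Then the truncation error of the sum-CDF series, ε_F = (α·μ^μ/(Γ(μ)·r̂^{αμ}))^L · ∑_{i=N}^∞ δ_i · r^{αi + αμL}/Γ(αi + αμL + 1), satisfies |ε_F| < (α·μ^μ·Γ(αμ)·(r/r̂)^{αμ}/Γ(μ))^L · ∑_{i=N}^∞ (2·μ·L·(r/r̂)^α·Γ(α(1+μ)))^i / Γ(iα + Lαμ + 1), i.e., it is bounded by the corresponding tail of the Mittag-Leffler series E_{α, αμL+1} evaluated at 2·μ·L·(r/r̂)^α·Γ(α(1+μ)), scaled by (α·μ^μ·Γ(αμ)·(r/r̂)^{αμ}/Γ(μ))^L. -/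
open MeasureTheory Real PowerSeries

lemma logGamma_combo {x z a b : ℝ} (hx : 0 < x) (hz : 0 < z) (ha : 0 ≤ a) (hb : 0 ≤ b)
    (hab : a + b = 1) :
    Real.log (Real.Gamma (a * x + b * z)) ≤ a * Real.log (Real.Gamma x) + b * Real.log (Real.Gamma z) := by
  have := Real.convexOn_log_Gamma.2 (Set.mem_Ioi.2 hx) (Set.mem_Ioi.2 hz) ha hb hab
  simpa using this

lemma Gamma_three_halves : Real.Gamma (3/2) = Real.sqrt π / 2 := by
  have h : (3/2 : ℝ) = 1/2 + 1 := by norm_num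
  rw [h, Real.Gamma_add_one (by norm_num), Real.Gamma_one_half_eq]
  ring

lemma Gamma_five_halves : Real.Gamma (5/2) = 3 * Real.sqrt π / 4 := by
  have h : (5/2 : ℝ) = 3/2 + 1 := by norm_num
  rw [h, Real.Gamma_add_one (by norm_num), Gamma_three_halves]
  ring

lemma sqrt_pi_gt : (3/2 : ℝ) < Real.sqrt π := by
  have h3 : (3:ℝ) < π := Real.pi_gt_three
  nlinarith [Real.sq_sqrt (le_of_lt Real.pi_pos), Real.sqrt_nonneg π]

lemma sqrt_pi_lt : Real.sqrt π < 16/9 := by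
  have h : π < 3.15 := Real.pi_lt_d2
  nlinarith [Real.sq_sqrt (le_of_lt Real.pi_pos), Real.sqrt_nonneg π]

lemma Gamma_ge_one {x : ℝ} (hx : 2 ≤ x) : 1 ≤ Real.Gamma x := by
  rcases eq_or_lt_of_le hx with h | h
  · rw [← h, Real.Gamma_two]
  · rw [← Real.Gamma_two]
    exact le_of_lt (Real.Gamma_strictMonoOn_Ici (by norm_num) (Set.mem_Ici.2 hx) h)


lemma logGamma_secant {x y z : ℝ} (hx : 0 < x) (hxy : x ≤ y) (hyz : y ≤ z) (hxz : x < z) :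
    (z - x) * Real.log (Real.Gamma y) ≤
      (z - y) * Real.log (Real.Gamma x) + (y - x) * Real.log (Real.Gamma z) := by
  have hzx : (0:ℝ) < z - x := by linarith
  have key := logGamma_combo (a := (z-y)/(z-x)) (b := (y-x)/(z-x)) hx (by linarith)
    (div_nonneg (by linarith) (by linarith)) (div_nonneg (by linarith) (by linarith)) (by field_simp; ring)
  have hcombo : (z-y)/(z-x) * x + (y-x)/(z-x) * z = y := by field_simp; ring
  rw [hcombo] at key
  have := mul_le_mul_of_nonneg_left key hzx.le
  calc (z-x) * Real.log (Real.Gamma y) ≤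
      (z-x) * ((z-y)/(z-x) * Real.log (Real.Gamma x) + (y-x)/(z-x) * Real.log (Real.Gamma z)) := this
    _ = (z - y) * Real.log (Real.Gamma x) + (y - x) * Real.log (Real.Gamma z) := by
        field_simp

lemma Gamma_ge_34_Icc {x : ℝ} (h1 : 1 ≤ x) (h2 : x ≤ 2) : 3/4 ≤ Real.Gamma x := by
  have hx : (0:ℝ) < x := by linarith
  have hΓx := Real.Gamma_pos_of_pos hx
  have hΓ32 : Real.Gamma (3/2) = Real.sqrt π / 2 := Gamma_three_halves
  have hΓ52 : Real.Gamma (5/2) = 3 * Real.sqrt π / 4 := Gamma_five_halves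
  rcases le_or_gt x (3/2) with hc | hc
  · -- secant through x, 3/2, 2
    have key := logGamma_secant hx hc (by norm_num : (3/2:ℝ) ≤ 2) (by linarith)
    rw [Real.Gamma_two, Real.log_one, mul_zero, add_zero] at key
    -- key : (2-x) * logΓ(3/2) ≤ (2 - 3/2) * logΓ x
    have hlog32 : Real.log (Real.Gamma (3/2)) ≤ 0 := by
      apply Real.log_nonpos (by positivity)
      rw [hΓ32]; nlinarith [sqrt_pi_lt, Real.sqrt_nonneg π]
    have step : 2 * Real.log (Real.Gamma (3/2)) ≤ Real.log (Real.Gamma x) := by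
      nlinarith [key, hlog32]
    have : Real.log (3/4) ≤ Real.log (Real.Gamma x) := by
      refine le_trans ?_ step
      have hsq : Real.Gamma (3/2) ^ 2 = π / 4 := by
        rw [hΓ32, div_pow, Real.sq_sqrt Real.pi_pos.le]; norm_num
      calc Real.log (3/4) ≤ Real.log (Real.Gamma (3/2) ^ 2) := by
            apply Real.log_le_log (by norm_num)
            rw [hsq]; linarith [Real.pi_gt_three]
        _ = 2 * Real.log (Real.Gamma (3/2)) := by rw [Real.log_pow]; norm_num
    exact (Real.log_le_log_iff (by norm_num) hΓx).1 this
  · -- secant through x, 2, 5/2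
    have key := logGamma_secant hx h2 (by norm_num : (2:ℝ) ≤ 5/2) (by linarith)
    rw [Real.Gamma_two, Real.log_one, mul_zero] at key
    -- key : 0 ≤ (5/2 - 2) * logΓ x + (2 - x) * logΓ (5/2)
    have hΓ52pos : 0 < Real.Gamma (5/2) := Real.Gamma_pos_of_pos (by norm_num)
    have hlog52 : 0 ≤ Real.log (Real.Gamma (5/2)) := by
      apply Real.log_nonneg
      rw [hΓ52]; nlinarith [sqrt_pi_gt]
    have step : -Real.log (Real.Gamma (5/2)) ≤ Real.log (Real.Gamma x) := by
      nlinarith [key, hlog52]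
    have : Real.log (3/4) ≤ Real.log (Real.Gamma x) := by
      refine le_trans ?_ step
      rw [← Real.log_inv]
      apply Real.log_le_log (by norm_num)
      rw [le_inv_comm₀ (by norm_num) hΓ52pos, hΓ52]
      nlinarith [sqrt_pi_lt, Real.sqrt_nonneg π]
    exact (Real.log_le_log_iff (by norm_num) hΓx).1 this

lemma Gamma_ge_34 {x : ℝ} (hx : 0 < x) : 3/4 ≤ Real.Gamma x := by
  rcases lt_or_ge x 1 with h | h
  · have hrec : Real.Gamma (x + 1) = x * Real.Gamma x := Real.Gamma_add_one hx.ne'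
    have h1 : 3/4 ≤ Real.Gamma (x + 1) := Gamma_ge_34_Icc (by linarith) (by linarith)
    have hΓ := Real.Gamma_pos_of_pos hx
    nlinarith
  · rcases le_or_gt x 2 with h2 | h2
    · exact Gamma_ge_34_Icc h h2
    · linarith [Gamma_ge_one h2.le]

lemma Gamma_three : Real.Gamma 3 = 2 := by
  have h : (3:ℝ) = 2 + 1 := by norm_num
  rw [h, Real.Gamma_add_one (by norm_num), Real.Gamma_two]; norm_num

lemma Gamma_ge_sub_one {x : ℝ} (hx : 3 ≤ x) : x - 1 ≤ Real.Gamma x := by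
  rcases eq_or_lt_of_le hx with h | h
  · rw [← h, Gamma_three]; norm_num
  · have hx2 : (0:ℝ) < x - 2 := by linarith
    have key := Real.convexOn_Gamma.2 (Set.mem_Ioi.2 (by norm_num : (0:ℝ) < 2))
      (Set.mem_Ioi.2 (by linarith : (0:ℝ) < x))
      (show (0:ℝ) ≤ (x-3)/(x-2) from div_nonneg (by linarith) (by linarith))
      (show (0:ℝ) ≤ 1/(x-2) by positivity) (by field_simp; ring)
    have hcombo : (x-3)/(x-2) * 2 + 1/(x-2) * x = 3 := by field_simp; ring
    simp only [smul_eq_mul] at key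
    rw [hcombo, Gamma_three, Real.Gamma_two] at key
    have hmul := mul_le_mul_of_nonneg_left key hx2.le
    have h2 : (x-2) * ((x-3)/(x-2) * 1 + 1/(x-2) * Real.Gamma x) = (x-3) + Real.Gamma x := by
      field_simp
    linarith [hmul, h2.le, h2.ge]

lemma Gamma_ge_linear {x : ℝ} (hx : 2 ≤ x) : 3*x/8 ≤ Real.Gamma x := by
  rcases le_or_gt x (8/3) with h1 | h1
  · linarith [Gamma_ge_one hx]
  · rcases le_or_gt x 3 with h2 | h2
    · have hmono : Real.Gamma (5/2) ≤ Real.Gamma x := by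
        rcases eq_or_lt_of_le (show (5/2:ℝ) ≤ x by linarith) with h | h
        · rw [h]
        · exact le_of_lt (Real.Gamma_strictMonoOn_Ici (by norm_num) (by simpa using (by linarith : (2:ℝ) ≤ x)) h)
      rw [Gamma_five_halves] at hmono
      nlinarith [sqrt_pi_gt]
    · linarith [Gamma_ge_sub_one h2.le]

lemma keyQ (x : ℝ) (hx : 0 < x) (j : ℕ) :
    max 1 (x + j) ≤ 4/3 * ((j:ℝ) + 2) * Real.Gamma x := by
  have hj : (0:ℝ) ≤ (j:ℝ) := Nat.cast_nonneg j
  rcases le_or_gt x 2 with h | h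
  · have h34 := Gamma_ge_34 hx
    have : max 1 (x + (j:ℝ)) ≤ (j:ℝ) + 2 := by
      apply max_le (by linarith) (by linarith)
    nlinarith [this, h34]
  · have hlin := Gamma_ge_linear h.le
    have hmax : max 1 (x + (j:ℝ)) = x + j := max_eq_right (by linarith)
    rw [hmax]
    nlinarith [hlin]

lemma Gamma_add_le_max {t a : ℝ} (ht : 0 < t) (ha0 : 0 ≤ a) (ha1 : a ≤ 1) :
    Real.Gamma (t + a) ≤ Real.Gamma t * max 1 t := by
  have hΓt := Real.Gamma_pos_of_pos ht
  have hΓta := Real.Gamma_pos_of_pos (by linarith : (0:ℝ) < t + a)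
  have key := logGamma_combo (x := t) (z := t + 1) ht (by linarith) (a := 1 - a) (b := a)
    (by linarith) ha0 (by ring)
  have hcombo : (1-a) * t + a * (t+1) = t + a := by ring
  rw [hcombo, Real.Gamma_add_one ht.ne', Real.log_mul ht.ne' hΓt.ne'] at key
  -- key : log Γ(t+a) ≤ (1-a) log Γ t + a (log t + log Γ t) = log Γ t + a log t
  have halog : a * Real.log t ≤ Real.log (max 1 t) := by
    rcases le_or_gt 1 t with h | h
    · rw [max_eq_right h]
      have := Real.log_nonneg h
      nlinarith
    · rw [max_eq_left h.le, Real.log_one]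
      have := Real.log_nonpos ht.le h.le
      nlinarith
  have hmax : (0:ℝ) < max 1 t := lt_of_lt_of_le one_pos (le_max_left _ _)
  have : Real.log (Real.Gamma (t+a)) ≤ Real.log (Real.Gamma t * max 1 t) := by
    rw [Real.log_mul hΓt.ne' hmax.ne']
    nlinarith [key, halog]
  exact (Real.log_le_log_iff hΓta (by positivity)).1 this

lemma Gamma_chain {x a : ℝ} (hx : 0 < x) (ha0 : 0 ≤ a) (ha1 : a ≤ 1) (n : ℕ) :
    Real.Gamma (x + n * a) ≤ Real.Gamma x * ∏ j ∈ Finset.range n, max 1 (x + j) := by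
  induction n with
  | zero => simp
  | succ n ih =>
    have hxna : (0:ℝ) < x + n * a := by positivity
    have step : Real.Gamma (x + (n+1) * a) ≤ Real.Gamma (x + n * a) * max 1 (x + n * a) := by
      have : x + ((n:ℝ)+1) * a = (x + n * a) + a := by ring
      rw [this]
      exact Gamma_add_le_max hxna ha0 ha1
    have hmax_le : max 1 (x + (n:ℝ) * a) ≤ max 1 (x + n) := by
      apply max_le (le_max_left _ _)
      apply le_max_of_le_right
      have : (n:ℝ) * a ≤ n := by nlinarith [Nat.cast_nonneg (α := ℝ) n]
      linarith
    rw [Finset.prod_range_succ]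
    push_cast
    calc Real.Gamma (x + ((n:ℝ)+1) * a) ≤ Real.Gamma (x + n * a) * max 1 (x + n * a) := step
      _ ≤ (Real.Gamma x * ∏ j ∈ Finset.range n, max 1 (x + j)) * max 1 (x + n) := by
          apply mul_le_mul ih hmax_le (by positivity)
          have : (0:ℝ) < Real.Gamma x := Real.Gamma_pos_of_pos hx
          positivity
      _ = Real.Gamma x * ((∏ j ∈ Finset.range n, max 1 (x + j)) * max 1 (x + n)) := by ring

lemma Gamma_ratio_lower {t a : ℝ} (ht : 1 ≤ t) (ha0 : 0 < a) (ha1 : a ≤ 1) :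
    1/2 * t ^ a * Real.Gamma t ≤ Real.Gamma (t + a) := by
  have ht0 : (0:ℝ) < t := by linarith
  have hΓt := Real.Gamma_pos_of_pos ht0
  have hta : (0:ℝ) < t + a := by linarith
  have hΓta := Real.Gamma_pos_of_pos hta
  have key := logGamma_combo (x := t + a) (z := t + a + 1) hta (by linarith) (a := a) (b := 1 - a)
    ha0.le (by linarith) (by ring)
  have hcombo : a * (t + a) + (1 - a) * (t + a + 1) = t + 1 := by ring
  rw [hcombo, Real.Gamma_add_one ht0.ne', Real.Gamma_add_one hta.ne',
    Real.log_mul ht0.ne' hΓt.ne', Real.log_mul hta.ne' hΓta.ne'] at key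
  -- key : log t + log Γ t ≤ a log Γ(t+a) + (1-a)(log(t+a) + log Γ(t+a))
  --     = log Γ(t+a) + (1-a) log(t+a)
  have hlog2 : Real.log (t + a) ≤ Real.log 2 + Real.log t := by
    rw [← Real.log_mul (by norm_num) ht0.ne']
    apply Real.log_le_log hta
    linarith
  have hlogt : 0 ≤ Real.log t := Real.log_nonneg ht
  have goal_log : Real.log (1/2 * t ^ a * Real.Gamma t) ≤ Real.log (Real.Gamma (t + a)) := by
    rw [Real.log_mul (by positivity) hΓt.ne', Real.log_mul (by norm_num) (by positivity),
      Real.log_rpow ht0]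
    have hlog_half : Real.log (1/2) = -Real.log 2 := by
      rw [one_div, Real.log_inv]
    rw [hlog_half]
    nlinarith [key, hlog2, hlogt, Real.log_nonneg (by norm_num : (1:ℝ) ≤ 2), ha1, ha0]
  exact (Real.log_le_log_iff (by positivity) hΓta).1 goal_log

open PowerSeries

/-- The recursively defined coefficients δ_i. -/
noncomputable def deltaCoef (α μ rh : ℝ) (L : ℕ) : ℕ → ℝ
  | 0 => Real.Gamma (α * μ) ^ L
  | (i + 1) =>
      (1 / (((i : ℝ) + 1) * Real.Gamma (α * μ))) *
        ∑ l ∈ Finset.range (i + 1),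
          deltaCoef α μ rh L (i - l) *
            ((((l : ℝ) + 1) * (L : ℝ) + ((l : ℝ) + 1) - ((i : ℝ) + 1)) *
              Real.Gamma (α * (((l : ℝ) + 1) + μ)) *
              (-μ * rh ^ (-α)) ^ (l + 1) / (Nat.factorial (l + 1) : ℝ))
  termination_by i => i
  decreasing_by omega

lemma mul_derivative_pow (φ : PowerSeries ℝ) (n : ℕ) :
    φ * (d⁄dX ℝ) (φ^n) = n • ((d⁄dX ℝ) φ * φ^n) := by
  induction n with
  | zero => simp
  | succ n ih =>
    rw [pow_succ, Derivation.leibniz, smul_eq_mul, smul_eq_mul, mul_add, succ_nsmul]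
    have h2 : φ * (φ * (d⁄dX ℝ) (φ^n)) = n • ((d⁄dX ℝ) φ * (φ^n * φ)) := by
      have : φ * (φ * (d⁄dX ℝ) (φ^n)) = φ * (φ * (d⁄dX ℝ) (φ^n)) := rfl
      calc φ * (φ * (d⁄dX ℝ) (φ^n)) = (φ * (d⁄dX ℝ) (φ^n)) * φ := by ring
        _ = (n • ((d⁄dX ℝ) φ * φ^n)) * φ := by rw [ih]
        _ = n • ((d⁄dX ℝ) φ * (φ^n * φ)) := by rw [smul_mul_assoc]; ring_nf
    rw [h2]
    have h1 : φ * (φ^n * (d⁄dX ℝ) φ) = (d⁄dX ℝ) φ * (φ^n * φ) := by ring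
    rw [h1, add_comm]

noncomputable def psiS (α μ c : ℝ) : PowerSeries ℝ :=
  PowerSeries.mk fun l => Real.Gamma (α * ((l:ℝ) + μ)) * (-c)^l / (Nat.factorial l : ℝ)

lemma coeff_pow_recursion (φ : PowerSeries ℝ) (L i : ℕ) :
    (PowerSeries.constantCoeff φ) * (((i:ℝ)+1) * PowerSeries.coeff (i+1) (φ^L)) =
      ∑ l ∈ Finset.range (i+1),
        ((((l:ℝ)+1)*(L:ℝ) + ((l:ℝ)+1) - ((i:ℝ)+1)) * PowerSeries.coeff (l+1) φ *
          PowerSeries.coeff (i-l) (φ^L)) := by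
  have hco : PowerSeries.coeff i (φ * (d⁄dX ℝ) (φ^L)) =
      PowerSeries.coeff i (L • ((d⁄dX ℝ) φ * φ^L)) := by
    rw [mul_derivative_pow]
  rw [PowerSeries.coeff_mul, map_nsmul, PowerSeries.coeff_mul,
    Finset.Nat.sum_antidiagonal_eq_sum_range_succ_mk,
    Finset.Nat.sum_antidiagonal_eq_sum_range_succ_mk] at hco
  simp only [PowerSeries.coeff_derivative] at hco
  -- hco : ∑ k ∈ range (i+1), coeff k φ * (coeff (i-k+1) (φ^L) * (i-k+1))
  --      = L • ∑ k ∈ range (i+1), (coeff (k+1) φ * (k+1)) * coeff (i-k) (φ^L)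
  rw [Finset.sum_range_succ'] at hco
  -- peeled : ∑_{l ∈ range i} f (l+1) + f 0
  simp only [Nat.sub_zero, Nat.cast_zero] at hco
  have hL : ∀ x : ℝ, L • x = (L:ℝ) * x := fun x => nsmul_eq_mul L x
  rw [hL] at hco
  rw [Finset.mul_sum] at hco
  -- rewrite the shifted sum terms
  have hshift : ∀ l ∈ Finset.range i,
      PowerSeries.coeff (l+1) φ * (PowerSeries.coeff (i-(l+1)+1) (φ^L) * ((i-(l+1):ℕ)+1 : ℝ)) =
      ((i:ℝ) - (l:ℝ)) * PowerSeries.coeff (l+1) φ * PowerSeries.coeff (i-l) (φ^L) := by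
    intro l hl
    have hli : l + 1 ≤ i := Finset.mem_range.1 hl
    have h1 : i - (l+1) + 1 = i - l := by omega
    have h2 : ((i - (l+1) : ℕ) : ℝ) + 1 = (i:ℝ) - (l:ℝ) := by
      have : ((i - (l+1) : ℕ) : ℝ) = (i:ℝ) - ((l:ℝ)+1) := by
        rw [Nat.cast_sub hli]; push_cast; ring
      rw [this]; ring
    rw [h1, h2]; ring
  rw [Finset.sum_congr rfl hshift] at hco
  -- now isolate the k=0 term
  have hzero : PowerSeries.coeff 0 φ = PowerSeries.constantCoeff φ :=
    congrFun PowerSeries.coeff_zero_eq_constantCoeff φ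
  -- extend left sum to range (i+1): term at l = i is zero
  have hext : ∑ l ∈ Finset.range i, ((i:ℝ) - (l:ℝ)) * PowerSeries.coeff (l+1) φ *
      PowerSeries.coeff (i-l) (φ^L) =
      ∑ l ∈ Finset.range (i+1), ((i:ℝ) - (l:ℝ)) * PowerSeries.coeff (l+1) φ *
      PowerSeries.coeff (i-l) (φ^L) := by
    rw [Finset.sum_range_succ]
    simp
  rw [hext] at hco
  have final : (PowerSeries.constantCoeff φ) * (((i:ℝ)+1) * PowerSeries.coeff (i+1) (φ^L)) =
      ∑ l ∈ Finset.range (i+1), ((L:ℝ) * (PowerSeries.coeff (l+1) φ * ((l:ℝ)+1) *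
        PowerSeries.coeff (i-l) (φ^L))) -
      ∑ l ∈ Finset.range (i+1), ((i:ℝ) - (l:ℝ)) * PowerSeries.coeff (l+1) φ *
        PowerSeries.coeff (i-l) (φ^L) := by
    rw [← hco, hzero]
    push_cast
    ring
  rw [final, ← Finset.sum_sub_distrib]
  apply Finset.sum_congr rfl
  intro l _
  ring

lemma psiS_coeff (α μ c : ℝ) (l : ℕ) :
    PowerSeries.coeff l (psiS α μ c) = Real.Gamma (α * ((l:ℝ) + μ)) * (-c)^l / (Nat.factorial l : ℝ) := by
  rw [psiS, PowerSeries.coeff_mk]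

lemma psiS_constantCoeff (α μ c : ℝ) :
    PowerSeries.constantCoeff (psiS α μ c) = Real.Gamma (α * μ) := by
  rw [← congrFun PowerSeries.coeff_zero_eq_constantCoeff (psiS α μ c), psiS_coeff]
  simp

lemma deltaCoef_eq_coeff (α μ rh : ℝ) (L : ℕ) (hg : Real.Gamma (α*μ) ≠ 0) : ∀ i,
    deltaCoef α μ rh L i = PowerSeries.coeff i ((psiS α μ (μ * rh^(-α)))^L) := by
  intro i
  induction i using Nat.strong_induction_on with
  | _ i ih =>
    match i with
    | 0 =>
      rw [deltaCoef,
        congrFun PowerSeries.coeff_zero_eq_constantCoeff ((psiS α μ (μ * rh^(-α)))^L),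
        map_pow, psiS_constantCoeff]
    | (i+1) =>
      rw [deltaCoef]
      have hrec := coeff_pow_recursion (psiS α μ (μ * rh^(-α))) L i
      rw [psiS_constantCoeff] at hrec
      have hne : ((i:ℝ)+1) * Real.Gamma (α*μ) ≠ 0 := by
        apply mul_ne_zero _ hg
        positivity
      rw [eq_comm, ← sub_eq_zero]
      have key : PowerSeries.coeff (i+1) ((psiS α μ (μ * rh^(-α)))^L) =
          (1 / (((i:ℝ)+1) * Real.Gamma (α*μ))) * ∑ l ∈ Finset.range (i+1),
            ((((l:ℝ)+1)*(L:ℝ) + ((l:ℝ)+1) - ((i:ℝ)+1)) * PowerSeries.coeff (l+1) (psiS α μ (μ * rh^(-α))) *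
              PowerSeries.coeff (i-l) ((psiS α μ (μ * rh^(-α)))^L)) := by
        rw [← hrec]
        field_simp
        ring_nf
        rw [mul_comm μ α, mul_inv_cancel_right₀ hg]
      rw [key, sub_eq_zero]
      congr 1
      apply Finset.sum_congr rfl
      intro l hl
      have hli : l < i + 1 := Finset.mem_range.1 hl
      rw [ih (i - l) (by omega), psiS_coeff]
      have hcast : α * (((l+1:ℕ):ℝ) + μ) = α * (((l:ℝ)+1) + μ) := by push_cast; ring
      rw [hcast]
      have hneg : (-(μ * rh^(-α)))^(l+1) = (-μ * rh^(-α))^(l+1) := by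
        congr 1; ring
      rw [hneg]
      ring

lemma sum_pow_le (b : ℝ) (hb : 0 ≤ b) (n : ℕ) :
    ∑ k ∈ Finset.range (n+1), b^k ≤ (b+1)^n := by
  induction n with
  | zero => simp
  | succ n ih =>
    rw [Finset.sum_range_succ, pow_succ (b+1)]
    have h1 : b^(n+1) ≤ b * (b+1)^n := by
      rw [pow_succ, mul_comm (b^n) b]
      exact mul_le_mul_of_nonneg_left (pow_le_pow_left₀ hb (by linarith) n) hb
    nlinarith [pow_nonneg (by linarith : (0:ℝ) ≤ b+1) n, ih, h1]

lemma coeff_pow_le (φ : PowerSeries ℝ) (g J : ℝ) (hg : 0 ≤ g) (hJ : 0 ≤ J)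
    (h : ∀ l, |PowerSeries.coeff l φ| ≤ g * J^l) (L : ℕ) (i : ℕ) :
    |PowerSeries.coeff i (φ^L)| ≤ g^L * ((L:ℝ)*J)^i := by
  induction L generalizing i with
  | zero =>
    rw [pow_zero, PowerSeries.coeff_one]
    rcases Nat.eq_zero_or_pos i with rfl | hi
    · simp
    · simp only [Nat.pos_iff_ne_zero.1 hi, if_false, abs_zero]
      positivity
  | succ L ihL =>
    rw [pow_succ, PowerSeries.coeff_mul, Finset.Nat.sum_antidiagonal_eq_sum_range_succ_mk]
    calc |∑ k ∈ Finset.range (i+1), PowerSeries.coeff k (φ^L) * PowerSeries.coeff (i-k) φ|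
        ≤ ∑ k ∈ Finset.range (i+1), |PowerSeries.coeff k (φ^L) * PowerSeries.coeff (i-k) φ| :=
          Finset.abs_sum_le_sum_abs _ _
      _ ≤ ∑ k ∈ Finset.range (i+1), (g^L * ((L:ℝ)*J)^k) * (g * J^(i-k)) := by
          apply Finset.sum_le_sum
          intro k _
          rw [abs_mul]
          exact mul_le_mul (ihL k) (h (i-k)) (abs_nonneg _) (by positivity)
      _ = g^(L+1) * J^i * ∑ k ∈ Finset.range (i+1), (L:ℝ)^k := by
          rw [Finset.mul_sum]
          apply Finset.sum_congr rfl
          intro k hk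
          have hki : k ≤ i := by
            have := Finset.mem_range.1 hk; omega
          rw [mul_pow]
          have : J^k * J^(i-k) = J^i := pow_mul_pow_sub J hki
          calc g^L * ((L:ℝ)^k * J^k) * (g * J^(i-k))
              = g^(L+1) * (L:ℝ)^k * (J^k * J^(i-k)) := by ring
            _ = g^(L+1) * J^i * (L:ℝ)^k := by rw [this]; ring
      _ ≤ g^(L+1) * J^i * ((L:ℝ)+1)^i := by
          apply mul_le_mul_of_nonneg_left (sum_pow_le _ (Nat.cast_nonneg L) i) (by positivity)
      _ = g^(L+1) * (((L:ℕ)+1:ℝ)*J)^i := by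
          rw [mul_pow]; push_cast; ring
      _ = g^(L+1) * ((((L+1:ℕ)):ℝ)*J)^i := by push_cast; ring

lemma prod_add_two (m : ℕ) : ∏ j ∈ Finset.range m, ((j:ℝ)+2) = (Nat.factorial (m+1) : ℝ) := by
  induction m with
  | zero => simp
  | succ m ih =>
    rw [Finset.prod_range_succ, ih]
    rw [Nat.factorial_succ (m+1)]
    push_cast
    ring

lemma psi_coeff_abs {α μ c : ℝ} (hα0 : 0 < α) (hα1 : α ≤ 1) (hμ : 0 < μ) (hc : 0 ≤ c) (l : ℕ) :
    |PowerSeries.coeff l (psiS α μ c)| ≤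
      Real.Gamma (α*μ) * (4/3 * Real.Gamma (α*(1+μ)) * c)^l := by
  have hgpos : 0 < Real.Gamma (α*μ) := Real.Gamma_pos_of_pos (by positivity)
  have hx : (0:ℝ) < α*(1+μ) := by positivity
  have hΓx : 0 < Real.Gamma (α*(1+μ)) := Real.Gamma_pos_of_pos hx
  rw [psiS_coeff]
  match l with
  | 0 => simp [abs_of_pos hgpos]
  | (m+1) =>
    have hargpos : (0:ℝ) < α * (((m+1:ℕ):ℝ) + μ) := by positivity
    have habs : |Real.Gamma (α * (((m+1:ℕ):ℝ) + μ)) * (-c)^(m+1) / (Nat.factorial (m+1) : ℝ)| =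
        Real.Gamma (α * (((m+1:ℕ):ℝ) + μ)) * c^(m+1) / (Nat.factorial (m+1) : ℝ) := by
      rw [abs_div, abs_mul, abs_pow, abs_neg, abs_of_nonneg hc,
        abs_of_pos (Real.Gamma_pos_of_pos hargpos), Nat.abs_cast]
    rw [habs]
    -- Gamma chain bound
    have harg : α * (((m+1:ℕ):ℝ) + μ) = α*(1+μ) + m * α := by push_cast; ring
    have hchain := Gamma_chain hx hα0.le hα1 m
    rw [← harg] at hchain
    have hprod : ∏ j ∈ Finset.range m, max 1 (α*(1+μ) + j) ≤
        (4/3)^m * Real.Gamma (α*(1+μ))^m * (Nat.factorial (m+1) : ℝ) := by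
      calc ∏ j ∈ Finset.range m, max 1 (α*(1+μ) + j)
          ≤ ∏ j ∈ Finset.range m, (4/3 * ((j:ℝ)+2) * Real.Gamma (α*(1+μ))) := by
            apply Finset.prod_le_prod
            · intro j _; positivity
            · intro j _; exact keyQ _ hx j
        _ = (4/3)^m * Real.Gamma (α*(1+μ))^m * ∏ j ∈ Finset.range m, ((j:ℝ)+2) := by
            rw [Finset.prod_mul_distrib, Finset.prod_mul_distrib, Finset.prod_const,
              Finset.prod_const, Finset.card_range]
            ring
        _ = (4/3)^m * Real.Gamma (α*(1+μ))^m * (Nat.factorial (m+1) : ℝ) := by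
            rw [prod_add_two]
    have hfact : (0:ℝ) < (Nat.factorial (m+1) : ℝ) := by positivity
    have hG : Real.Gamma (α * (((m+1:ℕ):ℝ) + μ)) ≤
        Real.Gamma (α*(1+μ)) * ((4/3)^m * Real.Gamma (α*(1+μ))^m * (Nat.factorial (m+1) : ℝ)) :=
      le_trans hchain (mul_le_mul_of_nonneg_left hprod hΓx.le)
    have h43 : (1:ℝ) ≤ 4/3 * Real.Gamma (α*μ) := by
      have := Gamma_ge_34 (show (0:ℝ) < α*μ by positivity)
      linarith
    calc Real.Gamma (α * (((m+1:ℕ):ℝ) + μ)) * c^(m+1) / (Nat.factorial (m+1) : ℝ)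
        ≤ (Real.Gamma (α*(1+μ)) * ((4/3)^m * Real.Gamma (α*(1+μ))^m * (Nat.factorial (m+1) : ℝ)))
            * c^(m+1) / (Nat.factorial (m+1) : ℝ) := by
          gcongr
      _ = (4/3)^m * Real.Gamma (α*(1+μ))^(m+1) * c^(m+1) := by
          field_simp
          ring
      _ ≤ Real.Gamma (α*μ) * (4/3 * Real.Gamma (α*(1+μ)) * c)^(m+1) := by
          rw [mul_pow, mul_pow]
          have hpow : (4/3:ℝ)^m ≤ Real.Gamma (α*μ) * (4/3)^(m+1) := by
            rw [pow_succ]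
            nlinarith [pow_pos (show (0:ℝ) < 4/3 by norm_num) m, h43, hgpos]
          calc (4/3)^m * Real.Gamma (α*(1+μ))^(m+1) * c^(m+1)
              ≤ (Real.Gamma (α*μ) * (4/3)^(m+1)) * Real.Gamma (α*(1+μ))^(m+1) * c^(m+1) := by
                apply mul_le_mul_of_nonneg_right _ (by positivity)
                exact mul_le_mul_of_nonneg_right hpow (by positivity)
            _ = Real.Gamma (α*μ) * ((4/3)^(m+1) * Real.Gamma (α*(1+μ))^(m+1) * c^(m+1)) := by ring

lemma deltaCoef_abs_le (α μ rh : ℝ) (hμ : 0 < μ) (hrh : 0 < rh) (hα0 : 0 < α) (hα1 : α ≤ 1)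
    (L : ℕ) (i : ℕ) :
    |deltaCoef α μ rh L i| ≤ Real.Gamma (α*μ)^L *
      ((L:ℝ) * (4/3 * Real.Gamma (α*(1+μ)) * (μ * rh^(-α))))^i := by
  have hg : 0 < Real.Gamma (α*μ) := Real.Gamma_pos_of_pos (by positivity)
  have hc : (0:ℝ) ≤ μ * rh^(-α) := by positivity
  rw [deltaCoef_eq_coeff α μ rh L hg.ne' i]
  exact coeff_pow_le _ _ _ hg.le (by positivity)
    (fun l => psi_coeff_abs hα0 hα1 hμ hc l) L i


/-- Truncation-error bound for the sum-CDF series, case 0 < α < 1. -/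
theorem sum_cdf_truncation_bound_of_alpha_lt_one
    (α μ rh : ℝ) (hμ : 0 < μ) (hrh : 0 < rh) (hα0 : 0 < α) (hα1 : α < 1)
    (L : ℕ) (hL : 1 ≤ L) (r : ℝ) (hr : 0 < r) (N : ℕ) (hN : 1 ≤ N) :
    |(α * μ ^ μ / (Real.Gamma μ * rh ^ (α * μ))) ^ L *
        ∑' i : ℕ,
          deltaCoef α μ rh L (N + i) *
            r ^ (α * ((N : ℝ) + (i : ℝ)) + α * μ * (L : ℝ)) /
            Real.Gamma (α * ((N : ℝ) + (i : ℝ)) + α * μ * (L : ℝ) + 1)| <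
      (α * μ ^ μ * Real.Gamma (α * μ) * (r / rh) ^ (α * μ) / Real.Gamma μ) ^ L *
        ∑' i : ℕ,
          (2 * μ * (L : ℝ) * (r / rh) ^ α * Real.Gamma (α * (1 + μ))) ^ (N + i) /
            Real.Gamma (((N : ℝ) + (i : ℝ)) * α + (L : ℝ) * α * μ + 1) := by
  have hg : 0 < Real.Gamma (α*μ) := Real.Gamma_pos_of_pos (by positivity)
  have hG1 : 0 < Real.Gamma (α*(1+μ)) := Real.Gamma_pos_of_pos (by positivity)
  have hΓμ : 0 < Real.Gamma μ := Real.Gamma_pos_of_pos hμ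
  set g := Real.Gamma (α*μ) with hg_def
  set G1 := Real.Gamma (α*(1+μ)) with hG1_def
  set K' : ℝ := 2 * μ * (L:ℝ) * (r/rh)^α * G1 with hK'_def
  have hrrh : (0:ℝ) < (r/rh)^α := Real.rpow_pos_of_pos (by positivity) α
  have hLpos : (0:ℝ) < (L:ℝ) := by exact_mod_cast hL
  have hK' : 0 < K' := by rw [hK'_def]; positivity
  set t : ℕ → ℝ := fun i => ((N:ℝ)+(i:ℝ))*α + (L:ℝ)*α*μ + 1 with ht_def
  have ht1 : ∀ i, 1 ≤ t i := by
    intro i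
    have h1 : (0:ℝ) ≤ ((N:ℝ)+(i:ℝ))*α := by positivity
    have h2 : (0:ℝ) ≤ (L:ℝ)*α*μ := by positivity
    simp only [ht_def]; linarith
  have hΓt : ∀ i, 0 < Real.Gamma (t i) := fun i => Real.Gamma_pos_of_pos (by linarith [ht1 i])
  set u : ℕ → ℝ := fun i => K'^(N+i) / Real.Gamma (t i) with hu_def
  have hu_pos : ∀ i, 0 < u i := fun i => div_pos (pow_pos hK' _) (hΓt i)
  -- summability of u
  have htstep : ∀ i, t (i+1) = t i + α := by
    intro i; simp only [ht_def]; push_cast; ring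
  have hu_sum : Summable u := by
    apply summable_of_ratio_norm_eventually_le (show (1:ℝ)/2 < 1 by norm_num)
    set M : ℝ := max 1 ((4*K')^(α⁻¹)) with hM_def
    have hM1 : (1:ℝ) ≤ M := le_max_left _ _
    have hMα : 4*K' ≤ M^α := by
      rcases le_or_gt (4*K') 1 with h | h
      · calc 4*K' ≤ 1 := h
          _ = (1:ℝ)^α := (Real.one_rpow α).symm
          _ ≤ M^α := Real.rpow_le_rpow (by norm_num) hM1 hα0.le
      · have h4 : (0:ℝ) ≤ 4*K' := by linarith
        calc 4*K' = (4*K')^(α⁻¹*α) := by rw [inv_mul_cancel₀ hα0.ne', Real.rpow_one]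
          _ = ((4*K')^(α⁻¹))^α := Real.rpow_mul h4 _ _
          _ ≤ M^α := Real.rpow_le_rpow (Real.rpow_nonneg (by linarith) _) (le_max_right _ _) hα0.le
    rw [Filter.eventually_atTop]
    refine ⟨⌈M/α⌉₊, fun i hi => ?_⟩
    have hiM : M/α ≤ (i:ℝ) := le_trans (Nat.le_ceil _) (by exact_mod_cast hi)
    have htiM : M ≤ t i := by
      have h1 : M ≤ α * i := by
        rw [div_le_iff₀ hα0] at hiM; linarith [hiM]
      have h2 : (0:ℝ) ≤ ((N:ℝ))*α := by positivity
      have h3 : (0:ℝ) ≤ (L:ℝ)*α*μ := by positivity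
      simp only [ht_def]; nlinarith [Nat.cast_nonneg (α := ℝ) i]
    have hti_pow : 4*K' ≤ (t i)^α :=
      le_trans hMα (Real.rpow_le_rpow (by linarith) htiM hα0.le)
    have hglow := Gamma_ratio_lower (ht1 i) hα0 hα1.le
    -- u (i+1) ≤ 1/2 * u i
    have hupos := hu_pos i
    have hup1 : u (i+1) = K' * K'^(N+i) / Real.Gamma (t i + α) := by
      simp only [hu_def, htstep i]
      rw [show N + (i+1) = (N+i) + 1 by omega, pow_succ]
      ring
    have hbound : u (i+1) ≤ 1/2 * u i := by
      rw [hup1, hu_def]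
      have hΓta : 0 < Real.Gamma (t i + α) := Real.Gamma_pos_of_pos (by linarith [ht1 i])
      have htpow : (0:ℝ) < (t i)^α := Real.rpow_pos_of_pos (by linarith [ht1 i]) α
      rw [div_le_iff₀ hΓta]
      have step : 1/2 * (K'^(N+i) / Real.Gamma (t i)) * (1/2 * (t i)^α * Real.Gamma (t i)) ≤
          1/2 * (K'^(N+i) / Real.Gamma (t i)) * Real.Gamma (t i + α) := by
        apply mul_le_mul_of_nonneg_left hglow (by positivity)
      refine le_trans ?_ step
      have hsimp : 1/2 * (K'^(N+i) / Real.Gamma (t i)) * (1/2 * (t i)^α * Real.Gamma (t i)) =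
          K'^(N+i) * ((t i)^α / 4) := by
        field_simp
        ring_nf
        rw [mul_inv_cancel₀ (hΓt i).ne', one_mul]
      rw [hsimp]
      calc K' * K'^(N+i) = K'^(N+i) * K' := by ring
        _ ≤ K'^(N+i) * ((t i)^α / 4) := by
            apply mul_le_mul_of_nonneg_left _ (by positivity)
            linarith
    calc ‖u (i+1)‖ = u (i+1) := by rw [Real.norm_eq_abs, abs_of_pos (hu_pos (i+1))]
      _ ≤ 1/2 * u i := hbound
      _ = 1/2 * ‖u i‖ := by rw [Real.norm_eq_abs, abs_of_pos (hu_pos i)]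
  -- per-term bound
  set c : ℝ := μ * rh^(-α) with hc_def
  have hc : 0 < c := by
    have : (0:ℝ) < rh^(-α) := Real.rpow_pos_of_pos hrh _
    rw [hc_def]; positivity
  have hKr : ((L:ℝ) * (4/3 * G1 * c)) * r^α = 2/3 * K' := by
    rw [hc_def, hK'_def]
    have hdr : (r/rh)^α = r^α * (rh^α)⁻¹ := by
      rw [Real.div_rpow hr.le hrh.le, div_eq_mul_inv]
    have hneg : rh^(-α) = (rh^α)⁻¹ := Real.rpow_neg hrh.le α
    rw [hdr, hneg]; ring
  set f : ℕ → ℝ := fun i =>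
      deltaCoef α μ rh L (N + i) * r ^ (α * ((N : ℝ) + (i : ℝ)) + α * μ * (L : ℝ)) /
        Real.Gamma (α * ((N : ℝ) + (i : ℝ)) + α * μ * (L : ℝ) + 1) with hf_def
  have hGarg : ∀ i : ℕ, α * ((N : ℝ) + (i : ℝ)) + α * μ * (L : ℝ) + 1 = t i := by
    intro i; simp only [ht_def]; ring
  have hrsplit : ∀ i : ℕ, r ^ (α * ((N : ℝ) + (i : ℝ)) + α * μ * (L : ℝ)) =
      (r^α)^(N+i) * r^(α*μ*(L:ℝ)) := by
    intro i
    rw [Real.rpow_add hr]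
    congr 1
    have h1 : α * ((N:ℝ) + (i:ℝ)) = α * (((N+i : ℕ)) : ℝ) := by push_cast; ring
    rw [h1, Real.rpow_mul hr.le, Real.rpow_natCast]
  have hrμL : (0:ℝ) < r^(α*μ*(L:ℝ)) := Real.rpow_pos_of_pos hr _
  set C : ℝ := g^L * r^(α*μ*(L:ℝ)) with hC_def
  have hCpos : 0 < C := by rw [hC_def]; positivity
  have hfb : ∀ i, |f i| ≤ 2/3 * C * u i := by
    intro i
    have hdel := deltaCoef_abs_le α μ rh hμ hrh hα0 hα1.le L (N+i)
    rw [← hg_def, ← hG1_def, ← hc_def] at hdel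
    have hfi : f i = deltaCoef α μ rh L (N + i) * ((r^α)^(N+i) * r^(α*μ*(L:ℝ))) / Real.Gamma (t i) := by
      rw [hf_def]
      simp only
      rw [hGarg i, hrsplit i]
    rw [hfi, abs_div, abs_of_pos (hΓt i), abs_mul]
    have habs2 : |(r^α)^(N+i) * r^(α*μ*(L:ℝ))| = (r^α)^(N+i) * r^(α*μ*(L:ℝ)) := by
      apply abs_of_pos
      have : (0:ℝ) < r^α := Real.rpow_pos_of_pos hr _
      positivity
    rw [habs2]
    have h2 : |deltaCoef α μ rh L (N+i)| * (r^α)^(N+i) ≤ g^L * ((2/3)^(N+i) * K'^(N+i)) := by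
      have hra : (0:ℝ) < r^α := Real.rpow_pos_of_pos hr _
      calc |deltaCoef α μ rh L (N+i)| * (r^α)^(N+i)
          ≤ (g^L * ((L:ℝ)*(4/3*G1*c))^(N+i)) * (r^α)^(N+i) :=
            mul_le_mul_of_nonneg_right hdel (by positivity)
        _ = g^L * (((L:ℝ)*(4/3*G1*c)) * r^α)^(N+i) := by rw [mul_pow]; ring
        _ = g^L * (2/3 * K')^(N+i) := by rw [hKr]
        _ = g^L * ((2/3)^(N+i) * K'^(N+i)) := by rw [mul_pow]
    have h4 : ((2:ℝ)/3)^(N+i) ≤ 2/3 := by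
      have hNi : 1 ≤ N + i := by omega
      calc ((2:ℝ)/3)^(N+i) ≤ ((2:ℝ)/3)^1 :=
            pow_le_pow_of_le_one (by norm_num) (by norm_num) hNi
        _ = 2/3 := pow_one _
    have expr : |deltaCoef α μ rh L (N+i)| * ((r^α)^(N+i) * r^(α*μ*(L:ℝ))) / Real.Gamma (t i) =
        (|deltaCoef α μ rh L (N+i)| * (r^α)^(N+i)) * (r^(α*μ*(L:ℝ)) / Real.Gamma (t i)) := by
      ring
    rw [expr]
    have hpos3 : (0:ℝ) ≤ r^(α*μ*(L:ℝ)) / Real.Gamma (t i) := by positivity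
    calc (|deltaCoef α μ rh L (N+i)| * (r^α)^(N+i)) * (r^(α*μ*(L:ℝ)) / Real.Gamma (t i))
        ≤ (g^L * ((2/3)^(N+i) * K'^(N+i))) * (r^(α*μ*(L:ℝ)) / Real.Gamma (t i)) :=
          mul_le_mul_of_nonneg_right h2 hpos3
      _ ≤ (g^L * (2/3 * K'^(N+i))) * (r^(α*μ*(L:ℝ)) / Real.Gamma (t i)) := by
          apply mul_le_mul_of_nonneg_right _ hpos3
          apply mul_le_mul_of_nonneg_left _ (by positivity)
          exact mul_le_mul_of_nonneg_right h4 (by positivity)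
      _ = 2/3 * C * u i := by
          rw [hC_def, hu_def]
          ring
  -- summability of f and tsum bound
  have hCu : Summable (fun i => 2/3 * C * u i) := hu_sum.mul_left _
  have habs_sum : Summable (fun i => |f i|) :=
    Summable.of_nonneg_of_le (fun i => abs_nonneg _) hfb hCu
  have hf_sum : Summable f := habs_sum.of_abs
  have htsum_le : |∑' i, f i| ≤ 2/3 * C * (∑' i, u i) := by
    calc |∑' i, f i| ≤ ∑' i, |f i| := by
          have hns : Summable (fun i => ‖f i‖) := by simpa [Real.norm_eq_abs] using habs_sum
          have := norm_tsum_le_tsum_norm hns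
          simpa [Real.norm_eq_abs] using this
      _ ≤ ∑' i, 2/3 * C * u i := Summable.tsum_le_tsum hfb habs_sum hCu
      _ = 2/3 * C * ∑' i, u i := tsum_mul_left
  have hS : 0 < ∑' i, u i := Summable.tsum_pos hu_sum (fun i => (hu_pos i).le) 0 (hu_pos 0)
  -- prefactor algebra
  set P : ℝ := α * μ ^ μ / (Real.Gamma μ * rh ^ (α * μ)) with hP_def
  have hμμ : (0:ℝ) < μ ^ μ := Real.rpow_pos_of_pos hμ _
  have hrhαμ : (0:ℝ) < rh ^ (α * μ) := Real.rpow_pos_of_pos hrh _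
  have hP : 0 < P := by rw [hP_def]; positivity
  have hQP : (α * μ ^ μ * g * (r/rh) ^ (α*μ) / Real.Gamma μ)^L = P^L * C := by
    have hbase : α * μ ^ μ * g * (r/rh) ^ (α*μ) / Real.Gamma μ = P * (g * r^(α*μ)) := by
      rw [hP_def]
      have hdr : (r/rh)^(α*μ) = r^(α*μ) * (rh^(α*μ))⁻¹ := by
        rw [Real.div_rpow hr.le hrh.le, div_eq_mul_inv]
      rw [hdr]
      field_simp
    rw [hbase, mul_pow, mul_pow, hC_def]
    have hendL : (r^(α*μ))^L = r^(α*μ*(L:ℝ)) := by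
      rw [← Real.rpow_natCast (r^(α*μ)) L, ← Real.rpow_mul hr.le]
    rw [hendL]
  -- final chain
  have hLHS : |P ^ L * ∑' i, f i| ≤ P^L * (2/3 * C * (∑' i, u i)) := by
    rw [abs_mul, abs_of_pos (pow_pos hP L)]
    exact mul_le_mul_of_nonneg_left htsum_le (by positivity)
  have hstrict : P^L * (2/3 * C * (∑' i, u i)) < P^L * C * (∑' i, u i) := by
    have hPL : (0:ℝ) < P^L := pow_pos hP L
    nlinarith [hS, hCpos, hPL, mul_pos (mul_pos hPL hCpos) hS]
  calc |P ^ L * ∑' i, f i| ≤ P^L * (2/3 * C * (∑' i, u i)) := hLHS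
    _ < P^L * C * (∑' i, u i) := hstrict
    _ = (α * μ ^ μ * g * (r/rh) ^ (α*μ) / Real.Gamma μ)^L * ∑' i, u i := by
        rw [hQP]
end

section
/- Let μ, r̂ > 0, 0 < α < 2, let L ≥ 1 be an integer, and let G > 0. Define, for s > 0, P_e(s) = (1/2)·(α·μ^μ/(Γ(μ)·r̂^{αμ}))^L · ∑_{i=0}^∞ δ_i · (4·G·s/L)^{−(αi + αμL)/2} / Γ((αi + αμL)/2 + 1) (the exact average symbol error rate series of the L-branch equal-gain combining receiver). Then in the high-SNR regime P_e decays with diversity order αμL/2; precisely, lim_{s→∞} s^{αμL/2} · P_e(s) = (L/(4G))^{αμL/2} · (α·μ^μ·Γ(αμ)/(Γ(μ)·r̂^{αμ}))^L / (2·Γ(αμL/2 + 1)). -/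
set_option maxHeartbeats 1000000

open MeasureTheory Real

namespace AserAux

lemma Gamma_le_one {x : ℝ} (h1 : 1 ≤ x) (h2 : x ≤ 2) : Real.Gamma x ≤ 1 := by
  have hc := Real.convexOn_Gamma
  have := hc.2 (by norm_num : (1:ℝ) ∈ Set.Ioi 0) (by norm_num : (2:ℝ) ∈ Set.Ioi 0)
    (by linarith : (0:ℝ) ≤ 2 - x) (by linarith : (0:ℝ) ≤ x - 1) (by ring)
  simp only [smul_eq_mul, Real.Gamma_one, Real.Gamma_two] at this
  have hx : (2 - x) * 1 + (x - 1) * 2 = x := by ring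
  rw [hx] at this
  linarith

lemma Gamma_mono {a b : ℝ} (h2 : 2 ≤ a) (hab : a ≤ b) : Real.Gamma a ≤ Real.Gamma b :=
  Real.Gamma_strictMonoOn_Ici.monotoneOn h2 (le_trans h2 hab) hab

lemma one_le_Gamma {x : ℝ} (h : 2 ≤ x) : 1 ≤ Real.Gamma x := by
  have := Gamma_mono (le_refl (2:ℝ)) h
  rwa [Real.Gamma_two] at this

lemma Gamma_ge_sixth {x : ℝ} (hx : 0 < x) : 1/6 ≤ Real.Gamma x := by
  have key : ∀ y : ℝ, 1 ≤ y → y ≤ 2 → 1/6 ≤ Real.Gamma y := by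
    intro y h1 h2
    have hdup := Real.Gamma_mul_Gamma_add_half y
    have hπpos : (0:ℝ) < √π := Real.sqrt_pos.2 Real.pi_pos
    have hup : Real.Gamma (y + 1/2) ≤ 3/4 * √π := by
      have hpi : (4:ℝ)/3 ≤ √π := by
        rw [show (4:ℝ)/3 = √((4/3)^2) by rw [Real.sqrt_sq]; norm_num]
        exact Real.sqrt_le_sqrt (by nlinarith [Real.pi_gt_three])
      rcases le_or_gt (y + 1/2) 2 with h | h
      · have := Gamma_le_one (by linarith) h
        nlinarith
      · have hm : Real.Gamma (y + 1/2) ≤ Real.Gamma (5/2) := Gamma_mono (by linarith) (by linarith)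
        have h52 : Real.Gamma (5/2) = 3/4 * √π := by
          have e1 : (5:ℝ)/2 = 3/2 + 1 := by norm_num
          have e2 : (3:ℝ)/2 = 1/2 + 1 := by norm_num
          rw [e1, Real.Gamma_add_one (by norm_num), e2,
            Real.Gamma_add_one (by norm_num), Real.Gamma_one_half_eq]
          ring
        linarith
    have hg : (1:ℝ) ≤ Real.Gamma (2*y) := one_le_Gamma (by linarith)
    have h23 : (2:ℝ) ^ ((3:ℕ):ℝ) = 8 := by rw [Real.rpow_natCast]; norm_num
    have h8 : (2:ℝ) ^ (-((3:ℕ):ℝ)) = 1/8 := by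
      rw [Real.rpow_neg (by norm_num), h23]; norm_num
    have hr : (1:ℝ)/8 ≤ (2:ℝ) ^ (1 - 2*y) := by
      rw [← h8]
      exact Real.rpow_le_rpow_of_exponent_le (by norm_num) (by push_cast; linarith)
    have hprod : (1:ℝ)/8 ≤ Real.Gamma (2*y) * (2:ℝ) ^ (1 - 2*y) := by
      calc (1:ℝ)/8 = 1 * (1/8) := by ring
      _ ≤ Real.Gamma (2*y) * (2:ℝ) ^ (1 - 2*y) :=
          mul_le_mul hg hr (by norm_num) (by linarith)
    have hlhs : (1:ℝ)/8 * √π ≤ Real.Gamma y * Real.Gamma (y + 1/2) := by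
      rw [hdup]
      calc (1:ℝ)/8 * √π ≤ (Real.Gamma (2*y) * (2:ℝ) ^ (1 - 2*y)) * √π := by
            exact mul_le_mul_of_nonneg_right hprod (le_of_lt hπpos)
      _ = Real.Gamma (2*y) * (2:ℝ) ^ (1 - 2*y) * √π := by ring
    have hGypos : 0 < Real.Gamma y := Real.Gamma_pos_of_pos (by linarith)
    nlinarith
  rcases le_or_gt 1 x with h1 | h1
  · rcases le_or_gt x 2 with h2 | h2
    · exact key x h1 h2
    · linarith [one_le_Gamma (le_of_lt h2)]
  · have hne : x ≠ 0 := ne_of_gt hx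
    have hrec : Real.Gamma (x + 1) = x * Real.Gamma x := Real.Gamma_add_one hne
    have hk := key (x+1) (by linarith) (by linarith)
    nlinarith [Real.Gamma_pos_of_pos hx]

/-- Master comparison: Γ x ≤ (6 / min x 1) * Γ y for 0 < x ≤ y. -/
lemma Gamma_le_Gamma_mul {x y : ℝ} (hx : 0 < x) (hxy : x ≤ y) :
    Real.Gamma x ≤ 6 / min x 1 * Real.Gamma y := by
  have hy : 0 < y := lt_of_lt_of_le hx hxy
  have hGy : 1/6 ≤ Real.Gamma y := Gamma_ge_sixth hy
  have hGypos : 0 < Real.Gamma y := Real.Gamma_pos_of_pos hy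
  rcases le_or_gt 2 x with h2 | h2
  · have hmono := Gamma_mono h2 hxy
    have hmin : min x 1 = 1 := min_eq_right (by linarith)
    rw [hmin]
    nlinarith [Real.Gamma_pos_of_pos hx]
  rcases le_or_gt 1 x with h1 | h1
  · have hle := Gamma_le_one h1 (le_of_lt h2)
    have hmin : min x 1 = 1 := min_eq_right h1
    rw [hmin]; nlinarith
  · have hne : x ≠ 0 := ne_of_gt hx
    have hrec : Real.Gamma (x+1) = x * Real.Gamma x := Real.Gamma_add_one hne
    have hle : Real.Gamma (x+1) ≤ 1 := Gamma_le_one (by linarith) (by linarith)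
    have hmin : min x 1 = x := min_eq_left (le_of_lt h1)
    rw [hmin, div_mul_eq_mul_div, le_div_iff₀ hx]
    nlinarith

/-- Real version of the Beta integral identity. -/
lemma Gamma_mul_Gamma_eq (a b : ℝ) (ha : 0 < a) (hb : 0 < b) :
    Real.Gamma a * Real.Gamma b
      = Real.Gamma (a + b) * ∫ x in (0:ℝ)..1, x ^ (a-1) * (1-x) ^ (b-1) := by
  have h := Complex.Gamma_mul_Gamma_eq_betaIntegral
    (s := (a:ℂ)) (t := (b:ℂ)) (by simpa using ha) (by simpa using hb)
  have hbeta : Complex.betaIntegral (a:ℂ) (b:ℂ)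
      = ((∫ x in (0:ℝ)..1, x ^ (a-1) * (1-x) ^ (b-1) : ℝ) : ℂ) := by
    rw [Complex.betaIntegral, ← intervalIntegral.integral_ofReal]
    refine intervalIntegral.integral_congr ?_
    intro x hx
    rw [Set.uIcc_of_le (by norm_num : (0:ℝ) ≤ 1)] at hx
    obtain ⟨hx0, hx1⟩ := hx
    push_cast
    rw [Complex.ofReal_cpow hx0 (a-1), Complex.ofReal_cpow (show (0:ℝ) ≤ 1-x by linarith) (b-1)]
    push_cast
    ring
  rw [hbeta] at h
  rw [← Complex.ofReal_inj]
  push_cast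
  rw [← Complex.Gamma_ofReal, ← Complex.Gamma_ofReal, ← Complex.Gamma_ofReal] at *
  push_cast at h ⊢
  rw [h]

lemma continuous_rpow_const {c : ℝ} (hc : 0 ≤ c) : Continuous (fun x : ℝ => x ^ c) := by
  rw [continuous_iff_continuousAt]
  intro x
  exact Real.continuousAt_rpow_const x c (Or.inr hc)

/-- Beta integral comparison: exponent scaling by c ≥ 1 shrinks the Beta integral. -/
lemma beta_compare {p q c : ℝ} (hp : 0 ≤ p) (hq : 0 ≤ q) (hc : 1 ≤ c) :
    (∫ x in (0:ℝ)..1, x ^ (c*p) * (1-x) ^ (c*q))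
      ≤ ∫ x in (0:ℝ)..1, x ^ p * (1-x) ^ q := by
  have hint1 : IntervalIntegrable (fun x : ℝ => x ^ (c*p) * (1-x) ^ (c*q))
      MeasureTheory.volume 0 1 :=
    (((continuous_rpow_const (by positivity)).mul
      (((continuous_rpow_const (by positivity)).comp (continuous_const.sub continuous_id))))).intervalIntegrable 0 1
  have hint2 : IntervalIntegrable (fun x : ℝ => x ^ p * (1-x) ^ q)
      MeasureTheory.volume 0 1 :=
    (((continuous_rpow_const hp).mul
      (((continuous_rpow_const hq).comp (continuous_const.sub continuous_id))))).intervalIntegrable 0 1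
  refine intervalIntegral.integral_mono_on (by norm_num) hint1 hint2 ?_
  intro x hx
  obtain ⟨hx0, hx1⟩ := hx
  have key : ∀ t e : ℝ, 0 ≤ t → t ≤ 1 → 0 ≤ e → t ^ (c*e) ≤ t ^ e := by
    intro t e ht0 ht1 he
    rcases eq_or_lt_of_le he with he0 | he0
    · rw [← he0]; simp
    rcases eq_or_lt_of_le ht0 with ht0' | ht0'
    · rw [← ht0', Real.zero_rpow (by positivity), Real.zero_rpow (ne_of_gt he0)]
    · exact Real.rpow_le_rpow_of_exponent_ge ht0' ht1 (le_mul_of_one_le_left he hc)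
  have h1 := key x p hx0 hx1 hp
  have h2 := key (1-x) q (by linarith) (by linarith) hq
  have hnn : (0:ℝ) ≤ x ^ (c*p) := Real.rpow_nonneg hx0 _
  have hnn2 : (0:ℝ) ≤ (1-x) ^ q := Real.rpow_nonneg (by linarith) _
  calc x ^ (c*p) * (1-x) ^ (c*q) ≤ x ^ (c*p) * (1-x) ^ q :=
        mul_le_mul_of_nonneg_left h2 hnn
  _ ≤ x ^ p * (1-x) ^ q := mul_le_mul_of_nonneg_right h1 hnn2

/-- Gamma super-additivity style inequality via Beta integrals. -/
lemma Gamma_beta_ineq {p q c : ℝ} (hp : 0 ≤ p) (hq : 0 ≤ q) (hc : 1 ≤ c) :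
    Real.Gamma (c*p+1) * Real.Gamma (c*q+1) * Real.Gamma (p+q+2)
      ≤ Real.Gamma (p+1) * Real.Gamma (q+1) * Real.Gamma (c*(p+q)+2) := by
  have e1 := Gamma_mul_Gamma_eq (c*p+1) (c*q+1) (by positivity) (by positivity)
  have e2 := Gamma_mul_Gamma_eq (p+1) (q+1) (by positivity) (by positivity)
  simp only [add_sub_cancel_right] at e1 e2
  have hcomp := beta_compare (p := p) (q := q) (c := c) hp hq hc
  have harg1 : c*p+1 + (c*q+1) = c*(p+q)+2 := by ring
  have harg2 : p+1 + (q+1) = p+q+2 := by ring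
  rw [harg1] at e1
  rw [harg2] at e2
  have hG1 : 0 < Real.Gamma (c*(p+q)+2) := Real.Gamma_pos_of_pos (by positivity)
  have hG2 : 0 < Real.Gamma (p+q+2) := Real.Gamma_pos_of_pos (by positivity)
  rw [e1, e2]
  calc Real.Gamma (c*(p+q)+2) * (∫ x in (0:ℝ)..1, x ^ (c*p) * (1-x) ^ (c*q))
        * Real.Gamma (p+q+2)
      ≤ Real.Gamma (c*(p+q)+2) * (∫ x in (0:ℝ)..1, x ^ p * (1-x) ^ q)
        * Real.Gamma (p+q+2) := by
        apply mul_le_mul_of_nonneg_right _ (le_of_lt hG2)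
        exact mul_le_mul_of_nonneg_left hcomp (le_of_lt hG1)
  _ = Real.Gamma (p+q+2) * (∫ x in (0:ℝ)..1, x ^ p * (1-x) ^ q) * Real.Gamma (c*(p+q)+2) := by
        ring

noncomputable def hfun (α : ℝ) (j : ℕ) : ℝ := Real.Gamma (α*j+1) / (j.factorial : ℝ)

lemma hfun_pos {α : ℝ} (hα : 0 < α) (j : ℕ) : 0 < hfun α j := by
  have : (0:ℝ) < (j.factorial : ℝ) := by positivity
  exact div_pos (Real.Gamma_pos_of_pos (by positivity)) this

lemma Gamma_add_nat_le (y : ℝ) (n : ℕ) (hy : 1 ≤ y) :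
    Real.Gamma (y + n) ≤ Real.Gamma y * (y + n)^n := by
  induction n with
  | zero => simp
  | succ n ih =>
    have hyn : (0:ℝ) < y + n := by positivity
    have e : y + (n+1 : ℕ) = (y + n) + 1 := by push_cast; ring
    rw [e, Real.Gamma_add_one (ne_of_gt hyn)]
    have hle : y + (n:ℝ) ≤ y + n + 1 := by linarith
    have hpow : (y+(n:ℝ))^(n+1) ≤ (y+(n:ℝ)+1)^(n+1) :=
      pow_le_pow_left₀ (le_of_lt hyn) hle _
    have hGy : 0 < Real.Gamma y := Real.Gamma_pos_of_pos (by linarith)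
    calc (y+(n:ℝ)) * Real.Gamma (y+(n:ℝ)) ≤ (y+(n:ℝ)) * (Real.Gamma y * (y+(n:ℝ))^n) :=
        mul_le_mul_of_nonneg_left ih (le_of_lt hyn)
    _ = Real.Gamma y * (y+(n:ℝ))^(n+1) := by ring
    _ ≤ Real.Gamma y * (y+(n:ℝ)+1)^(n+1) := mul_le_mul_of_nonneg_left hpow (le_of_lt hGy)

lemma weight_bound (α μ : ℝ) (hα : 0 < α) (hμ : 0 < μ) :
    ∃ K q : ℝ, 0 < K ∧ 1 ≤ q ∧ ∀ l : ℕ,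
      Real.Gamma (α*((l:ℝ)+1) + α*μ) ≤ K * q^(l+1) * Real.Gamma (α*((l:ℝ)+1)+1) := by
  set n : ℕ := ⌈α*μ⌉₊ with hn
  refine ⟨(6 / min (α+α*μ) 1) * Real.exp (n*(n+1)), Real.exp (n*α), by positivity,
    Real.one_le_exp (by positivity), ?_⟩
  intro l
  set x : ℝ := α*((l:ℝ)+1) + α*μ with hxdef
  set y : ℝ := α*((l:ℝ)+1) + 1 with hydef
  have hxpos : 0 < x := by positivity
  have hy1 : 1 ≤ y := by rw [hydef]; nlinarith [Nat.cast_nonneg (α := ℝ) l]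
  have hceil : α*μ ≤ (n:ℝ) := Nat.le_ceil _
  have hxy : x ≤ y + n := by rw [hxdef, hydef]; linarith
  have step1 : Real.Gamma x ≤ 6 / min x 1 * Real.Gamma (y + n) :=
    Gamma_le_Gamma_mul hxpos hxy
  have hxl : α + α*μ ≤ x := by rw [hxdef]; nlinarith [Nat.cast_nonneg (α := ℝ) l]
  have hminle : min (α+α*μ) 1 ≤ min x 1 := by
    apply le_min (le_trans (min_le_left _ _) hxl) (min_le_right _ _)
  have hminpos : 0 < min (α+α*μ) 1 := lt_min (by positivity) one_pos
  have hfrac : 6 / min x 1 ≤ 6 / min (α+α*μ) 1 :=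
    div_le_div_of_nonneg_left (by norm_num) hminpos hminle
  have step2 : Real.Gamma (y + n) ≤ Real.Gamma y * (y+n)^n := Gamma_add_nat_le y n hy1
  have step3 : (y+n)^n ≤ Real.exp (n*(n+1)) * (Real.exp (n*α))^(l+1) := by
    have h1 : (y+(n:ℝ)) ≤ Real.exp (y+n) := by
      have := Real.add_one_le_exp (y+(n:ℝ))
      linarith
    have h2 : (y+(n:ℝ))^n ≤ (Real.exp (y+n))^n := pow_le_pow_left₀ (by positivity) h1 n
    have h3 : (Real.exp (y+(n:ℝ)))^n = Real.exp ((n:ℝ)*(y+n)) := by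
      rw [← Real.exp_nat_mul]
    have h4 : (n:ℝ)*(y+(n:ℝ)) = (n:ℝ)*((n:ℝ)+1) + ((l:ℝ)+1)*((n:ℝ)*α) := by
      rw [hydef]; ring
    have h5 : Real.exp ((n:ℝ)*((n:ℝ)+1) + ((l:ℝ)+1)*((n:ℝ)*α))
        = Real.exp ((n:ℝ)*((n:ℝ)+1)) * (Real.exp ((n:ℝ)*α))^(l+1) := by
      rw [Real.exp_add]
      congr 1
      rw [← Real.exp_nat_mul]
      congr 1
      push_cast; ring
    rw [h3, h4, h5] at h2
    exact h2
  have hGy : 0 < Real.Gamma y := Real.Gamma_pos_of_pos (by linarith)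
  have hGyn : 0 < Real.Gamma (y+n) := Real.Gamma_pos_of_pos (by positivity)
  calc Real.Gamma x ≤ 6 / min x 1 * Real.Gamma (y + n) := step1
  _ ≤ 6 / min (α+α*μ) 1 * Real.Gamma (y + n) :=
      mul_le_mul_of_nonneg_right hfrac (le_of_lt hGyn)
  _ ≤ 6 / min (α+α*μ) 1 * (Real.Gamma y * (y+n)^n) := by
      apply mul_le_mul_of_nonneg_left step2 (by positivity)
  _ ≤ 6 / min (α+α*μ) 1 * (Real.Gamma y * (Real.exp (n*(n+1)) * (Real.exp (n*α))^(l+1))) := by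
      apply mul_le_mul_of_nonneg_left _ (by positivity)
      exact mul_le_mul_of_nonneg_left step3 (le_of_lt hGy)
  _ = 6 / min (α+α*μ) 1 * Real.exp (n*(n+1)) * (Real.exp (n*α))^(l+1)
        * Real.Gamma (α*((l:ℝ)+1)+1) := by rw [hydef]; ring

lemma KL {α : ℝ} (hα0 : 0 < α) (hα2 : α ≤ 2) (i l : ℕ) (hl : l ≤ i) :
    (1 + hfun α (i-l)) * hfun α l ≤ 42 * (1 + hfun α i) := by
  have hpos : ∀ j : ℕ, 0 < hfun α j := hfun_pos hα0
  have hcast : ((i-l : ℕ) : ℝ) = (i:ℝ) - (l:ℝ) := by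
    push_cast [Nat.cast_sub hl]; ring
  rcases le_or_gt α 1 with hα1 | hα1
  · -- α ≤ 1 : hfun bounded by 6
    have hb : ∀ j : ℕ, hfun α j ≤ 6 := by
      intro j
      have hj0 : (0:ℝ) ≤ (j:ℝ) := Nat.cast_nonneg j
      have h1 : (1:ℝ) ≤ α*j+1 := by nlinarith
      have hle : α*(j:ℝ)+1 ≤ (j:ℝ)+1 := by nlinarith
      have := Gamma_le_Gamma_mul (x := α*j+1) (y := (j:ℝ)+1) (by positivity) hle
      rw [min_eq_right h1, Real.Gamma_nat_eq_factorial] at this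
      rw [hfun, div_le_iff₀ (by positivity)]
      simpa using this
    have h1 := hb l
    have h2 := hb (i-l)
    have h3 := (hpos l).le
    have h4 := (hpos (i-l)).le
    have h5 := (hpos i).le
    nlinarith
  · -- α > 1
    have hlow : ∀ j : ℕ, 1/6 ≤ hfun α j := by
      intro j
      have hj0 : (0:ℝ) ≤ (j:ℝ) := Nat.cast_nonneg j
      have hle : (j:ℝ)+1 ≤ α*(j:ℝ)+1 := by nlinarith
      have := Gamma_le_Gamma_mul (x := (j:ℝ)+1) (y := α*j+1) (by positivity) hle
      rw [min_eq_right (by linarith), Real.Gamma_nat_eq_factorial] at this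
      rw [hfun, le_div_iff₀ (by positivity)]
      nlinarith [Real.Gamma_pos_of_pos (show (0:ℝ) < α*j+1 by positivity)]
    have part2 : hfun α l * hfun α (i-l) ≤ 2 * hfun α i := by
      have hbeta := Gamma_beta_ineq (p := (l:ℝ)) (q := ((i:ℝ)-(l:ℝ))) (c := α)
        (Nat.cast_nonneg l) (by have : (l:ℝ) ≤ i := Nat.cast_le.2 hl; linarith) (le_of_lt hα1)
      have hsum : (l:ℝ) + ((i:ℝ)-(l:ℝ)) = (i:ℝ) := by ring
      rw [hsum] at hbeta
      have hGi2 : Real.Gamma ((i:ℝ)+2) = ((i:ℝ)+1) * (i.factorial : ℝ) := by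
        have : (i:ℝ)+2 = ((i:ℝ)+1)+1 := by ring
        rw [this, Real.Gamma_add_one (by positivity), Real.Gamma_nat_eq_factorial]
      have hGαi2 : Real.Gamma (α*(i:ℝ)+2) = (α*(i:ℝ)+1) * Real.Gamma (α*(i:ℝ)+1) := by
        have : α*(i:ℝ)+2 = (α*(i:ℝ)+1)+1 := by ring
        rw [this, Real.Gamma_add_one (by positivity)]
      rw [hGi2, hGαi2, Real.Gamma_nat_eq_factorial] at hbeta
      have hGil : Real.Gamma (((i:ℝ)-(l:ℝ))+1) = ((i-l).factorial : ℝ) := by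
        rw [← hcast, Real.Gamma_nat_eq_factorial]
      rw [hGil] at hbeta
      -- hbeta : Γ(αl+1) * Γ(α(i-l)+1) * ((i+1) * i!) ≤ l! * (i-l)! * ((αi+1) * Γ(αi+1))
      have hfl : (0:ℝ) < (l.factorial : ℝ) := by positivity
      have hfil : (0:ℝ) < ((i-l).factorial : ℝ) := by positivity
      have hfi : (0:ℝ) < (i.factorial : ℝ) := by positivity
      have hip : (0:ℝ) < (i:ℝ)+1 := by positivity
      have hi0 : (0:ℝ) ≤ (i:ℝ) := Nat.cast_nonneg i
      have hαi : α*(i:ℝ)+1 ≤ 2*((i:ℝ)+1) := by nlinarith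
      have hGαi : 0 < Real.Gamma (α*(i:ℝ)+1) := Real.Gamma_pos_of_pos (by nlinarith)
      rw [hfun, hfun, hfun, div_mul_div_comm, hcast,
        show 2 * (Real.Gamma (α*(i:ℝ)+1) / (i.factorial:ℝ))
          = (2 * Real.Gamma (α*(i:ℝ)+1)) / (i.factorial:ℝ) by ring,
        div_le_div_iff₀ (by positivity) hfi]
      refine le_of_mul_le_mul_right ?_ hip
      calc Real.Gamma (α*(l:ℝ)+1) * Real.Gamma (α*((i:ℝ)-(l:ℝ))+1) * (i.factorial:ℝ) * ((i:ℝ)+1)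
          = Real.Gamma (α*(l:ℝ)+1) * Real.Gamma (α*((i:ℝ)-(l:ℝ))+1) * (((i:ℝ)+1) * (i.factorial:ℝ)) := by
            ring
      _ ≤ (l.factorial:ℝ) * ((i-l).factorial:ℝ) * ((α*(i:ℝ)+1) * Real.Gamma (α*(i:ℝ)+1)) := hbeta
      _ ≤ (l.factorial:ℝ) * ((i-l).factorial:ℝ) * ((2*((i:ℝ)+1)) * Real.Gamma (α*(i:ℝ)+1)) := by
            apply mul_le_mul_of_nonneg_left
              (mul_le_mul_of_nonneg_right hαi hGαi.le) (by positivity)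
      _ = 2 * Real.Gamma (α*(i:ℝ)+1) * ((l.factorial:ℝ) * ((i-l).factorial:ℝ)) * ((i:ℝ)+1) := by
            ring
    have h12 : hfun α l ≤ 12 * hfun α i := by
      have h6 : (1:ℝ) ≤ 6 * hfun α (i-l) := by linarith [hlow (i-l)]
      calc hfun α l = hfun α l * 1 := by ring
      _ ≤ hfun α l * (6 * hfun α (i-l)) :=
          mul_le_mul_of_nonneg_left h6 (hpos l).le
      _ = 6 * (hfun α l * hfun α (i-l)) := by ring
      _ ≤ 6 * (2 * hfun α i) := by linarith [part2]
      _ = 12 * hfun α i := by ring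
    nlinarith [hpos i, hpos l, hpos (i-l), part2, h12]

lemma geom_aux {D w : ℝ} (hD : 0 < D) (hw : 0 ≤ w) (h2 : 2*w ≤ D) (i : ℕ) :
    ∑ l ∈ Finset.range (i+1), D^(i-l) * w^(l+1) ≤ 2 * w * D^i := by
  have hterm : ∀ l ∈ Finset.range (i+1), D^(i-l) * w^(l+1) ≤ w * D^i * (1/2)^l := by
    intro l hl
    rw [Finset.mem_range] at hl
    have hli : l ≤ i := Nat.lt_succ_iff.1 hl
    have hwD : w ≤ D/2 := by linarith
    have h1 : w^l ≤ (D/2)^l := pow_le_pow_left₀ hw hwD l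
    have hpow : D^(i-l) * D^l = D^i := by
      rw [← pow_add]
      congr 1
      omega
    calc D^(i-l) * w^(l+1) = w * (D^(i-l) * w^l) := by ring
    _ ≤ w * (D^(i-l) * (D/2)^l) := by
        apply mul_le_mul_of_nonneg_left _ hw
        exact mul_le_mul_of_nonneg_left h1 (by positivity)
    _ = w * (D^(i-l) * D^l) * (1/2)^l := by
        rw [div_pow]; simp only [one_div, inv_pow]; ring
    _ = w * D^i * (1/2)^l := by rw [hpow]
  calc ∑ l ∈ Finset.range (i+1), D^(i-l) * w^(l+1)
      ≤ ∑ l ∈ Finset.range (i+1), w * D^i * (1/2)^l := Finset.sum_le_sum hterm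
  _ = w * D^i * ∑ l ∈ Finset.range (i+1), (1/2:ℝ)^l := by rw [Finset.mul_sum]
  _ ≤ w * D^i * 2 := by
      apply mul_le_mul_of_nonneg_left _ (by positivity)
      have := sum_geometric_two_le (i+1)
      simpa using this
  _ = 2 * w * D^i := by ring

lemma delta_bound (α μ rh : ℝ) (hα0 : 0 < α) (hα2 : α ≤ 2) (hμ : 0 < μ) (hrh : 0 < rh)
    (L : ℕ) (hL : 1 ≤ L) :
    ∃ A D : ℝ, 0 < A ∧ 1 ≤ D ∧ ∀ i : ℕ,
      |deltaCoef α μ rh L i| ≤ A * D^i * (1 + hfun α i) := by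
  obtain ⟨K, q, hK, hq, hW⟩ := weight_bound α μ hα0 hμ
  set g : ℝ := Real.Gamma (α*μ) with hgdef
  have hg : 0 < g := Real.Gamma_pos_of_pos (by positivity)
  clear_value g
  set m : ℝ := μ * rh^(-α) with hmdef
  have hm : 0 < m := mul_pos hμ (Real.rpow_pos_of_pos hrh _)
  clear_value m
  have hqm : 0 < q*m := mul_pos (by linarith) hm
  obtain ⟨D, hD1, hD2, hDmain⟩ :
      ∃ D : ℝ, 1 ≤ D ∧ 2*(q*m) ≤ D ∧ 84*q*m*K*((L:ℝ)+1)/g ≤ D := by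
    refine ⟨1 + 2*(q*m) + 84*q*m*K*((L:ℝ)+1)/g, ?_, ?_, ?_⟩ <;>
      · have h1 : 0 < 84*q*m*K*((L:ℝ)+1)/g := by positivity
        nlinarith
  have hDpos : 0 < D := by linarith
  refine ⟨g^L, D, by positivity, hD1, ?_⟩
  intro i
  induction i using Nat.strong_induction_on with
  | _ i ih =>
    match i with
    | 0 =>
      rw [deltaCoef, ← hgdef]
      have h0 : 0 < hfun α 0 := hfun_pos hα0 0
      have habs0 : |g^L| = g^L := abs_of_pos (by positivity)
      rw [habs0, pow_zero]
      nlinarith [pow_pos hg L]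
    | (i+1) =>
      rw [deltaCoef, ← hgdef]
      have hneg : -μ * rh ^ (-α) = -m := by rw [hmdef]; ring
      rw [hneg]
      have habs : |(1 / (((i : ℝ) + 1) * g))| = 1 / (((i : ℝ) + 1) * g) := by
        apply abs_of_pos; positivity
      rw [abs_mul, habs]
      set S := ∑ l ∈ Finset.range (i + 1),
          deltaCoef α μ rh L (i - l) *
            ((((l : ℝ) + 1) * (L : ℝ) + ((l : ℝ) + 1) - ((i : ℝ) + 1)) *
              Real.Gamma (α * (((l : ℝ) + 1) + μ)) *
              (-m) ^ (l + 1) / (Nat.factorial (l + 1) : ℝ)) with hSdef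
      have hhpos : 0 < 1 + hfun α (i+1) := by linarith [hfun_pos hα0 (i+1)]
      obtain ⟨Cb, hCbdef⟩ : ∃ Cb : ℝ,
          Cb = ((i:ℝ)+1) * ((L:ℝ)+1) * K * 42 * (g^L * (1 + hfun α (i+1))) := ⟨_, rfl⟩
      have hCbpos : 0 ≤ Cb := by
        rw [hCbdef]
        exact mul_nonneg (by positivity) (mul_nonneg (by positivity) hhpos.le)
      have hSbound : |S| ≤ Cb * (2 * (q*m) * D^i) := by
        rw [hSdef]
        refine le_trans (Finset.abs_sum_le_sum_abs _ _) ?_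
        have hterm : ∀ l ∈ Finset.range (i+1),
            |deltaCoef α μ rh L (i - l) *
              ((((l : ℝ) + 1) * (L : ℝ) + ((l : ℝ) + 1) - ((i : ℝ) + 1)) *
                Real.Gamma (α * (((l : ℝ) + 1) + μ)) *
                (-m) ^ (l + 1) / (Nat.factorial (l + 1) : ℝ))|
            ≤ Cb * (D^(i-l) * (q*m)^(l+1)) := by
          intro l hl
          rw [Finset.mem_range] at hl
          have hli : l ≤ i := Nat.lt_succ_iff.1 hl
          have hcastl : ((l:ℝ)) ≤ (i:ℝ) := Nat.cast_le.2 hli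
          have hδ : |deltaCoef α μ rh L (i - l)| ≤ g^L * D^(i-l) * (1 + hfun α (i-l)) :=
            ih (i-l) (by omega)
          have hcoef : |(((l : ℝ) + 1) * (L : ℝ) + ((l : ℝ) + 1) - ((i : ℝ) + 1))|
              ≤ ((i:ℝ)+1) * ((L:ℝ)+1) := by
            have hL1 : (1:ℝ) ≤ (L:ℝ) := by exact_mod_cast hL
            rw [abs_le]
            constructor
            · nlinarith [Nat.cast_nonneg (α := ℝ) l]
            · nlinarith [Nat.cast_nonneg (α := ℝ) l]
          have hGam : Real.Gamma (α * (((l : ℝ) + 1) + μ))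
              = Real.Gamma (α*((l:ℝ)+1) + α*μ) := by congr 1; ring
          have hGw := hW l
          have hmpow : |(-m) ^ (l + 1)| = m^(l+1) := by
            rw [abs_pow, abs_neg, abs_of_pos hm]
          have hF : (0:ℝ) < ((l+1).factorial : ℝ) := by positivity
          have hGx : (0:ℝ) < Real.Gamma (α*((l:ℝ)+1) + α*μ) := by
            apply Real.Gamma_pos_of_pos
            nlinarith [Nat.cast_nonneg (α := ℝ) l]
          have hGy : (0:ℝ) < Real.Gamma (α*((l:ℝ)+1)+1) := by
            apply Real.Gamma_pos_of_pos
            nlinarith [Nat.cast_nonneg (α := ℝ) l]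
          have hKLi : (1 + hfun α (i-l)) * hfun α (l+1) ≤ 42 * (1 + hfun α (i+1)) := by
            have := KL hα0 hα2 (i+1) (l+1) (by omega)
            have he : (i+1)-(l+1) = i-l := by omega
            rwa [he] at this
          have habs2 : |deltaCoef α μ rh L (i - l) *
              ((((l : ℝ) + 1) * (L : ℝ) + ((l : ℝ) + 1) - ((i : ℝ) + 1)) *
                Real.Gamma (α * (((l : ℝ) + 1) + μ)) *
                (-m) ^ (l + 1) / (Nat.factorial (l + 1) : ℝ))|
              = |deltaCoef α μ rh L (i - l)| *
                (|(((l : ℝ) + 1) * (L : ℝ) + ((l : ℝ) + 1) - ((i : ℝ) + 1))| *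
                  Real.Gamma (α*((l:ℝ)+1) + α*μ) * m^(l+1) / ((l+1).factorial : ℝ)) := by
            rw [abs_mul, abs_div, abs_mul, abs_mul, hmpow, hGam,
              abs_of_pos hGx, abs_of_pos hF]
          rw [habs2]
          have hhl : 0 ≤ 1 + hfun α (i-l) := by linarith [hfun_pos hα0 (i-l)]
          have hfl1 : ((l+1:ℕ):ℝ) = (l:ℝ)+1 := by push_cast; ring
          have hfeq : Real.Gamma (α*((l:ℝ)+1)+1)
              = hfun α (l+1) * ((l+1).factorial : ℝ) := by
            rw [hfun, hfl1, div_mul_cancel₀]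
            exact ne_of_gt hF
          have hfpos : 0 < hfun α (l+1) := hfun_pos hα0 (l+1)
          calc |deltaCoef α μ rh L (i - l)| *
                (|(((l : ℝ) + 1) * (L : ℝ) + ((l : ℝ) + 1) - ((i : ℝ) + 1))| *
                  Real.Gamma (α*((l:ℝ)+1) + α*μ) * m^(l+1) / ((l+1).factorial : ℝ))
              ≤ (g^L * D^(i-l) * (1 + hfun α (i-l))) *
                ((((i:ℝ)+1) * ((L:ℝ)+1)) *
                  (K * q^(l+1) * Real.Gamma (α*((l:ℝ)+1)+1)) * m^(l+1) / ((l+1).factorial : ℝ)) := by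
                gcongr <;> first
                  | exact hδ | exact hcoef | exact hGw | exact abs_nonneg _ | positivity
          _ = (g^L * (((i:ℝ)+1) * ((L:ℝ)+1)) * K) * (D^(i-l) * (q*m)^(l+1)) *
                ((1 + hfun α (i-l)) * hfun α (l+1)) := by
              rw [hfeq, mul_pow]
              field_simp
          _ ≤ (g^L * (((i:ℝ)+1) * ((L:ℝ)+1)) * K) * (D^(i-l) * (q*m)^(l+1)) *
                (42 * (1 + hfun α (i+1))) := by
              apply mul_le_mul_of_nonneg_left hKLi (by positivity)
          _ = Cb * (D^(i-l) * (q*m)^(l+1)) := by rw [hCbdef]; ring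
        calc ∑ l ∈ Finset.range (i+1), |deltaCoef α μ rh L (i - l) *
                ((((l : ℝ) + 1) * (L : ℝ) + ((l : ℝ) + 1) - ((i : ℝ) + 1)) *
                  Real.Gamma (α * (((l : ℝ) + 1) + μ)) *
                  (-m) ^ (l + 1) / (Nat.factorial (l + 1) : ℝ))|
            ≤ ∑ l ∈ Finset.range (i+1), Cb * (D^(i-l) * (q*m)^(l+1)) :=
              Finset.sum_le_sum hterm
        _ = Cb * ∑ l ∈ Finset.range (i+1), D^(i-l) * (q*m)^(l+1) := by
              rw [Finset.mul_sum]
        _ ≤ Cb * (2 * (q*m) * D^i) :=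
              mul_le_mul_of_nonneg_left (geom_aux hDpos hqm.le hD2 i) hCbpos
      calc 1 / (((i:ℝ)+1) * g) * |S|
          ≤ 1 / (((i:ℝ)+1) * g) * (Cb * (2 * (q*m) * D^i)) := by
            apply mul_le_mul_of_nonneg_left hSbound (by positivity)
      _ = (g^L * (1 + hfun α (i+1))) * D^i * (84*q*m*K*((L:ℝ)+1)/g) := by
            rw [hCbdef]
            have hne1 : ((i:ℝ)+1) ≠ 0 := by positivity
            have hne2 : g ≠ 0 := ne_of_gt hg
            field_simp
            ring
      _ ≤ (g^L * (1 + hfun α (i+1))) * D^i * D := by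
            apply mul_le_mul_of_nonneg_left hDmain
              (mul_nonneg (mul_nonneg (by positivity) hhpos.le) (by positivity))
      _ = g^L * D^(i+1) * (1 + hfun α (i+1)) := by ring

end AserAux

open Filter

open AserAux

/-- High-SNR asymptotics of the exact EGC average symbol error rate:
diversity order αμL/2 and the corresponding coding-gain constant. -/
theorem aser_egc_asymptotic
    (α μ rh : ℝ) (hμ : 0 < μ) (hrh : 0 < rh) (hα0 : 0 < α) (hα2 : α < 2)
    (L : ℕ) (hL : 1 ≤ L) (G : ℝ) (hG : 0 < G)
    (Pe : ℝ → ℝ)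
    (hPe : ∀ s : ℝ, 0 < s → Pe s =
      (1 / 2) * (α * μ ^ μ / (Real.Gamma μ * rh ^ (α * μ))) ^ L *
        ∑' i : ℕ,
          deltaCoef α μ rh L i *
            (4 * G * s / (L : ℝ)) ^ (-(α * (i : ℝ) + α * μ * (L : ℝ)) / 2) /
            Real.Gamma ((α * (i : ℝ) + α * μ * (L : ℝ)) / 2 + 1)) :
    Tendsto (fun s : ℝ => s ^ (α * μ * (L : ℝ) / 2) * Pe s) atTop
      (nhds (((L : ℝ) / (4 * G)) ^ (α * μ * (L : ℝ) / 2) *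
        (α * μ ^ μ * Real.Gamma (α * μ) / (Real.Gamma μ * rh ^ (α * μ))) ^ L /
        (2 * Real.Gamma (α * μ * (L : ℝ) / 2 + 1)))) := by
  have hL0 : (0:ℝ) < (L:ℝ) := by exact_mod_cast Nat.lt_of_lt_of_le Nat.zero_lt_one hL
  have hQ : (0:ℝ) < 4 * G / (L:ℝ) := by positivity
  set Q : ℝ := 4 * G / (L:ℝ) with hQdef
  clear_value Q
  set p : ℝ := α * μ * (L:ℝ) / 2 with hpdef
  have hp : 0 < p := by rw [hpdef]; positivity
  set C₁ : ℝ := (1 / 2) * (α * μ ^ μ / (Real.Gamma μ * rh ^ (α * μ))) ^ L with hC1def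
  -- the denominators
  set d : ℕ → ℝ := fun i => Real.Gamma ((α * (i : ℝ) + α * μ * (L : ℝ)) / 2 + 1) with hddef
  have hdpos : ∀ i : ℕ, 0 < d i := by
    intro i
    apply Real.Gamma_pos_of_pos
    have : (0:ℝ) ≤ (i:ℝ) := Nat.cast_nonneg i
    positivity
  set F : ℕ → ℝ → ℝ := fun i s =>
    deltaCoef α μ rh L i * (Q ^ (-(α * (i:ℝ) + α * μ * (L:ℝ)) / 2) * s ^ (-(α * (i:ℝ)) / 2)) / d i
    with hFdef
  -- Step A: pointwise rewriting
  have hA : ∀ s : ℝ, 0 < s → s ^ p * Pe s = C₁ * ∑' i, F i s := by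
    intro s hs
    rw [hPe s hs]
    have h1 : s ^ p * (C₁ * ∑' i, deltaCoef α μ rh L i *
          (4 * G * s / (L : ℝ)) ^ (-(α * (i : ℝ) + α * μ * (L : ℝ)) / 2) /
          Real.Gamma ((α * (i : ℝ) + α * μ * (L : ℝ)) / 2 + 1))
        = C₁ * ∑' i, s ^ p * (deltaCoef α μ rh L i *
          (4 * G * s / (L : ℝ)) ^ (-(α * (i : ℝ) + α * μ * (L : ℝ)) / 2) /
          Real.Gamma ((α * (i : ℝ) + α * μ * (L : ℝ)) / 2 + 1)) := by
      rw [tsum_mul_left]; ring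
    rw [h1]
    congr 1
    apply tsum_congr
    intro i
    have hQs : 4 * G * s / (L:ℝ) = Q * s := by rw [hQdef]; ring
    rw [hQs, Real.mul_rpow hQ.le hs.le]
    have hss : s ^ p * s ^ (-(α * (i:ℝ) + α * μ * (L:ℝ)) / 2) = s ^ (-(α * (i:ℝ)) / 2) := by
      rw [← Real.rpow_add hs]
      congr 1
      rw [hpdef]; ring
    calc s ^ p * (deltaCoef α μ rh L i *
          (Q ^ (-(α * (i:ℝ) + α * μ * (L:ℝ)) / 2) * s ^ (-(α * (i:ℝ) + α * μ * (L:ℝ)) / 2)) /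
          Real.Gamma ((α * (i : ℝ) + α * μ * (L : ℝ)) / 2 + 1))
        = deltaCoef α μ rh L i *
          (Q ^ (-(α * (i:ℝ) + α * μ * (L:ℝ)) / 2) *
            (s ^ p * s ^ (-(α * (i:ℝ) + α * μ * (L:ℝ)) / 2))) /
          Real.Gamma ((α * (i : ℝ) + α * μ * (L : ℝ)) / 2 + 1) := by ring
    _ = F i s := by rw [hss, hFdef]
  -- limits of each term
  set Lim : ℕ → ℝ := fun i =>
    if i = 0 then deltaCoef α μ rh L 0 * Q ^ (-(α * μ * (L:ℝ)) / 2) / d 0 else 0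
    with hLimdef
  have hLim0 : Lim 0 = deltaCoef α μ rh L 0 * Q ^ (-(α * μ * (L:ℝ)) / 2) / d 0 := by
    rw [hLimdef]; simp
  have hLimS : ∀ i : ℕ, Lim (i+1) = 0 := by
    intro i; rw [hLimdef]; simp
  have hab : ∀ i : ℕ, Tendsto (fun s => F i s) atTop (nhds (Lim i)) := by
    intro i
    match i with
    | 0 =>
      have hfeq : (fun s : ℝ => F 0 s) = fun _ : ℝ => Lim 0 := by
        funext s
        rw [hFdef, hLim0]
        simp only [Nat.cast_zero, mul_zero, neg_zero, zero_div, Real.rpow_zero, mul_one,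
          zero_add]
      rw [hfeq]
      exact tendsto_const_nhds
    | (i+1) =>
      have hy : (0:ℝ) < α * ((i:ℝ)+1) / 2 := by positivity
      have hfeq : (fun s : ℝ => F (i+1) s)
          = fun s : ℝ => (deltaCoef α μ rh L (i+1) *
              Q ^ (-(α * ((i:ℝ)+1) + α * μ * (L:ℝ)) / 2) / d (i+1)) *
              s ^ (-(α * ((i:ℝ)+1) / 2)) := by
        funext s
        rw [hFdef]
        push_cast
        rw [show -(α * ((i:ℝ)+1)) / 2 = -(α * ((i:ℝ)+1) / 2) by ring]
        ring
      rw [hfeq]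
      have h0 := (tendsto_rpow_neg_atTop hy).const_mul
        (deltaCoef α μ rh L (i+1) * Q ^ (-(α * ((i:ℝ)+1) + α * μ * (L:ℝ)) / 2) / d (i+1))
      simp only [mul_zero] at h0
      rw [hLimS i]
      exact h0
  -- delta bounds
  obtain ⟨A, D, hA0, hD1, hδ⟩ := delta_bound α μ rh hα0 (le_of_lt hα2) hμ hrh L hL
  have hDpos : (0:ℝ) < D := by linarith
  -- Gamma ratio bound via duplication
  have hratio : ∀ i : ℕ, Real.Gamma (α * (i:ℝ) + 1)
      ≤ 72 * (i.factorial : ℝ) * d i * 4^i := by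
    intro i
    have hx : (0:ℝ) ≤ α * (i:ℝ) := by positivity
    set x : ℝ := α * (i:ℝ) with hxdef
    have hπ1 : (1:ℝ) ≤ √π := by
      rw [show (1:ℝ) = √1 by simp]
      exact Real.sqrt_le_sqrt (by linarith [Real.pi_gt_three])
    have hdup := Real.Gamma_mul_Gamma_add_half ((x+1)/2)
    rw [show 2 * ((x+1)/2) = x + 1 by ring, show (x+1)/2 + 1/2 = x/2 + 1 by ring,
      show 1 - (x+1) = -x by ring] at hdup
    have h2x : (2:ℝ) ^ (-x) * (2:ℝ) ^ x = 1 := by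
      rw [← Real.rpow_add two_pos]; simp
    have hkey : Real.Gamma (x+1) = Real.Gamma ((x+1)/2) * Real.Gamma (x/2+1) * (2:ℝ)^x / √π := by
      rw [hdup, eq_div_iff (by positivity : √π ≠ 0)]
      linear_combination (-(Real.Gamma (x+1) * √π)) * h2x
    have hb1 : Real.Gamma ((x+1)/2) ≤ 12 * (i.factorial : ℝ) := by
      have hle : (x+1)/2 ≤ (i:ℝ)+1 := by
        rw [hxdef]
        have : (0:ℝ) ≤ (i:ℝ) := Nat.cast_nonneg i
        nlinarith
      have h := Gamma_le_Gamma_mul (x := (x+1)/2) (y := (i:ℝ)+1) (by positivity) hle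
      rw [Real.Gamma_nat_eq_factorial] at h
      have hmin : (1:ℝ)/2 ≤ min ((x+1)/2) 1 := by
        apply le_min _ (by norm_num)
        linarith
      have hfrac : 6 / min ((x+1)/2) 1 ≤ 12 := by
        rw [div_le_iff₀ (by linarith)]
        linarith
      have hfact : (0:ℝ) ≤ (i.factorial : ℝ) := by positivity
      calc Real.Gamma ((x+1)/2) ≤ 6 / min ((x+1)/2) 1 * (i.factorial : ℝ) := h
      _ ≤ 12 * (i.factorial : ℝ) := mul_le_mul_of_nonneg_right hfrac hfact
    have hb2 : Real.Gamma (x/2+1) ≤ 6 * d i := by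
      have hle : x/2+1 ≤ (α * (i:ℝ) + α * μ * (L:ℝ)) / 2 + 1 := by
        rw [hxdef]
        have : (0:ℝ) ≤ α * μ * (L:ℝ) := by positivity
        linarith
      have h := Gamma_le_Gamma_mul (x := x/2+1) (y := (α * (i:ℝ) + α * μ * (L:ℝ)) / 2 + 1)
        (by positivity) hle
      rw [min_eq_right (by linarith : (1:ℝ) ≤ x/2+1)] at h
      rw [hddef]
      simpa using h
    have hb3 : (2:ℝ)^x ≤ 4^i := by
      have h1 : (2:ℝ)^x ≤ (2:ℝ)^(((2*i:ℕ):ℝ)) := by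
        apply Real.rpow_le_rpow_of_exponent_le one_le_two
        rw [hxdef]; push_cast
        nlinarith [Nat.cast_nonneg (α := ℝ) i]
      rw [Real.rpow_natCast] at h1
      calc (2:ℝ)^x ≤ (2:ℝ)^(2*i) := h1
      _ = 4^i := by rw [pow_mul]; norm_num
    rw [hkey]
    have hnn : (0:ℝ) ≤ Real.Gamma ((x+1)/2) * Real.Gamma (x/2+1) * (2:ℝ)^x := by
      have := Real.Gamma_pos_of_pos (show (0:ℝ) < (x+1)/2 by positivity)
      have := Real.Gamma_pos_of_pos (show (0:ℝ) < x/2+1 by positivity)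
      positivity
    calc Real.Gamma ((x+1)/2) * Real.Gamma (x/2+1) * (2:ℝ)^x / √π
        ≤ Real.Gamma ((x+1)/2) * Real.Gamma (x/2+1) * (2:ℝ)^x := div_le_self hnn hπ1
    _ ≤ (12 * (i.factorial : ℝ)) * (6 * d i) * 4^i := by
        gcongr <;> first
          | exact hb1 | exact hb2 | exact hb3
          | positivity
          | exact (Real.Gamma_pos_of_pos (show (0:ℝ) < x/2+1 by positivity)).le
          | exact (Real.Gamma_pos_of_pos (show (0:ℝ) < (x+1)/2 by positivity)).le
    _ = 72 * (i.factorial : ℝ) * d i * 4^i := by ring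
  -- choose s₀ large
  have hα2half : (0:ℝ) < α/2 := by positivity
  obtain ⟨s₀, hs₀1, hs₀w⟩ : ∃ s₀ : ℝ, 1 ≤ s₀ ∧
      Q ^ (-(α/2)) * s₀ ^ (-(α/2)) * (8*D) ≤ 1 := by
    have hQa : (0:ℝ) < Q ^ (-(α/2)) := Real.rpow_pos_of_pos hQ _
    have hεpos : (0:ℝ) < 1/(8*D*Q^(-(α/2))+1) := by positivity
    have hev : ∀ᶠ t : ℝ in atTop, t ^ (-(α/2)) < 1/(8*D*Q^(-(α/2))+1) :=
      (tendsto_rpow_neg_atTop hα2half).eventually (gt_mem_nhds hεpos)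
    obtain ⟨s₀, hs₀a, hs₀b⟩ := (hev.and (eventually_ge_atTop 1)).exists
    refine ⟨s₀, hs₀b, ?_⟩
    have h1 : s₀ ^ (-(α/2)) ≤ 1/(8*D*Q^(-(α/2))+1) := le_of_lt hs₀a
    have hs0p : (0:ℝ) ≤ s₀ ^ (-(α/2)) := Real.rpow_nonneg (by linarith) _
    calc Q ^ (-(α/2)) * s₀ ^ (-(α/2)) * (8*D)
        ≤ Q ^ (-(α/2)) * (1/(8*D*Q^(-(α/2))+1)) * (8*D) := by
          apply mul_le_mul_of_nonneg_right _ (by linarith)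
          exact mul_le_mul_of_nonneg_left h1 hQa.le
    _ ≤ 1 := by
          rw [mul_one_div, div_mul_eq_mul_div, div_le_one (by positivity)]
          linarith
  obtain ⟨W, hWdef⟩ : ∃ W : ℝ, W = Q ^ (-(α/2)) * s₀ ^ (-(α/2)) := ⟨_, rfl⟩
  have hs₀pos : (0:ℝ) < s₀ := by linarith
  have hWpos : 0 < W := by
    rw [hWdef]
    exact mul_pos (Real.rpow_pos_of_pos hQ _) (Real.rpow_pos_of_pos hs₀pos _)
  have hW8 : W * (8*D) ≤ 1 := by rw [hWdef]; exact hs₀w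
  have hu1 : D*W < 1 := by nlinarith
  have hv1 : 4*D*W < 1 := by nlinarith
  have hupos : 0 ≤ D*W := by positivity
  have hvpos : 0 ≤ 4*D*W := by positivity
  obtain ⟨P, hPdef⟩ : ∃ P : ℝ, P = Q ^ (-(α*μ*(L:ℝ)/2)) := ⟨_, rfl⟩
  have hPpos : 0 < P := by rw [hPdef]; exact Real.rpow_pos_of_pos hQ _
  obtain ⟨bound, hbdef⟩ : ∃ bound : ℕ → ℝ,
      bound = fun i => (A * P) * (6*(D*W)^i + 72*(4*D*W)^i) := ⟨_, rfl⟩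
  have hsum : Summable bound := by
    rw [hbdef]
    apply Summable.mul_left
    exact ((summable_geometric_of_lt_one hupos hu1).mul_left 6).add
      ((summable_geometric_of_lt_one hvpos hv1).mul_left 72)
  have hbound : ∀ᶠ s in atTop, ∀ i : ℕ, ‖F i s‖ ≤ bound i := by
    filter_upwards [eventually_ge_atTop s₀] with s hss₀
    intro i
    have hs : 0 < s := lt_of_lt_of_le hs₀pos hss₀
    have hsplitQ : Q ^ (-(α * (i:ℝ) + α * μ * (L:ℝ)) / 2)
        = P * (Q ^ (-(α/2)))^i := by
      rw [show (-(α * (i:ℝ) + α * μ * (L:ℝ)) / 2) = (-(α*μ*(L:ℝ)/2)) + (-(α/2))*(i:ℝ) by ring,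
        Real.rpow_add hQ, Real.rpow_mul hQ.le, Real.rpow_natCast, hPdef]
    have hsplits : s ^ (-(α * (i:ℝ)) / 2) = (s ^ (-(α/2)))^i := by
      rw [show (-(α * (i:ℝ)) / 2) = (-(α/2))*(i:ℝ) by ring, Real.rpow_mul hs.le,
        Real.rpow_natCast]
    have hsbase : s ^ (-(α/2)) ≤ s₀ ^ (-(α/2)) :=
      Real.rpow_le_rpow_of_nonpos hs₀pos hss₀ (neg_nonpos.mpr (by positivity))
    have hQae : (0:ℝ) < Q ^ (-(α/2)) := Real.rpow_pos_of_pos hQ _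
    have hnorm : ‖F i s‖ = |deltaCoef α μ rh L i| *
        (Q ^ (-(α * (i:ℝ) + α * μ * (L:ℝ)) / 2) * s ^ (-(α * (i:ℝ)) / 2)) / d i := by
      rw [hFdef, Real.norm_eq_abs, abs_div, abs_mul, abs_of_pos (hdpos i),
        abs_mul, abs_of_pos (Real.rpow_pos_of_pos hQ _), abs_of_pos (Real.rpow_pos_of_pos hs _)]
    rw [hnorm, hsplitQ, hsplits]
    have hpow2 : (s ^ (-(α/2)))^i ≤ (s₀ ^ (-(α/2)))^i :=
      pow_le_pow_left₀ (Real.rpow_nonneg hs.le _) hsbase i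
    have hhpos : 0 < hfun α i := hfun_pos hα0 i
    have hd6 : 1/6 ≤ d i := by
      rw [hddef]
      apply Gamma_ge_sixth
      have : (0:ℝ) ≤ (i:ℝ) := Nat.cast_nonneg i
      positivity
    have hkey1 : (1 + hfun α i) / d i ≤ 6 + 72*4^i := by
      rw [div_le_iff₀ (hdpos i)]
      have hd1 : (1:ℝ) ≤ 6 * d i := by linarith
      have hd2 : hfun α i ≤ 72*4^i * d i := by
        rw [hfun, div_le_iff₀ (by positivity : (0:ℝ) < (i.factorial : ℝ))]
        calc Real.Gamma (α*(i:ℝ)+1) ≤ 72 * (i.factorial : ℝ) * d i * 4^i := hratio i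
        _ = 72*4^i * d i * (i.factorial : ℝ) := by ring
      nlinarith [hdpos i]
    calc |deltaCoef α μ rh L i| * (P * (Q ^ (-(α/2)))^i * (s ^ (-(α/2)))^i) / d i
        ≤ (A * D^i * (1 + hfun α i)) * (P * (Q ^ (-(α/2)))^i * (s₀ ^ (-(α/2)))^i) / d i := by
          have hnn1 : (0:ℝ) ≤ P * (Q ^ (-(α/2)))^i * (s₀ ^ (-(α/2)))^i := by
            have := Real.rpow_nonneg hs₀pos.le (-(α/2))
            positivity
          rw [div_le_div_iff_of_pos_right (hdpos i)]
          have hXnn : (0:ℝ) ≤ P * (Q ^ (-(α/2)))^i * (s ^ (-(α/2)))^i :=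
            mul_nonneg (mul_nonneg hPpos.le (pow_nonneg hQae.le i))
              (pow_nonneg (Real.rpow_nonneg hs.le _) i)
          have hBnn : (0:ℝ) ≤ A * D^i * (1 + hfun α i) :=
            mul_nonneg (mul_nonneg hA0.le (pow_nonneg hDpos.le i))
              (by linarith [hfun_pos hα0 i])
          refine mul_le_mul (hδ i) ?_ hXnn hBnn
          exact mul_le_mul_of_nonneg_left hpow2
            (mul_nonneg hPpos.le (pow_nonneg hQae.le i))
    _ = (A * P) * ((1 + hfun α i) / d i) * (D*W)^i := by
          rw [hWdef, mul_pow, mul_pow]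
          ring
    _ ≤ (A * P) * (6 + 72*4^i) * (D*W)^i := by
          apply mul_le_mul_of_nonneg_right _ (by positivity)
          exact mul_le_mul_of_nonneg_left hkey1 (by positivity)
    _ = bound i := by rw [hbdef]; ring
  have hDCT : Tendsto (fun s => ∑' i, F i s) atTop (nhds (∑' i, Lim i)) :=
    tendsto_tsum_of_dominated_convergence hsum hab hbound
  have htsum : ∑' i, Lim i = Lim 0 := by
    refine tsum_eq_single 0 ?_
    intro b hb
    rw [hLimdef]
    simp [hb]
  have hfinal := hDCT.const_mul C₁
  have heq : (fun s => C₁ * ∑' i, F i s) =ᶠ[atTop] (fun s : ℝ => s ^ p * Pe s) := by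
    filter_upwards [eventually_gt_atTop 0] with s hs
    exact (hA s hs).symm
  have hT := hfinal.congr' heq
  have hd0 : d 0 = Real.Gamma (p + 1) := by
    rw [hddef, hpdef]
    norm_num
  have hδ0 : deltaCoef α μ rh L 0 = Real.Gamma (α*μ)^L := by rw [deltaCoef]
  have hQinv : Q ^ (-(α * μ * (L:ℝ)) / 2) = ((L:ℝ)/(4*G)) ^ p := by
    rw [show (-(α * μ * (L:ℝ)) / 2) = -(α * μ * (L:ℝ)/2) by ring, ← hpdef,
      Real.rpow_neg hQ.le, ← Real.inv_rpow hQ.le]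
    congr 1
    rw [hQdef, inv_div]
  have hmul : (α * μ ^ μ / (Real.Gamma μ * rh ^ (α * μ))) ^ L * Real.Gamma (α*μ)^L
      = (α * μ ^ μ * Real.Gamma (α*μ) / (Real.Gamma μ * rh ^ (α * μ))) ^ L := by
    rw [← mul_pow]
    congr 1
    ring
  have hval : C₁ * ∑' i, Lim i
      = ((L:ℝ)/(4*G)) ^ p *
        (α * μ ^ μ * Real.Gamma (α*μ) / (Real.Gamma μ * rh ^ (α * μ))) ^ L /
        (2 * Real.Gamma (p + 1)) := by
    rw [htsum, hLim0, hδ0, hQinv, hd0, hC1def, ← hmul]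
    ring
  rwa [hval] at hT
end
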